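/- arXiv:2408.13231 — 3 statements merged into one kernel-verified Lean document; each statement's English description precedes it below -/
import Mathlib

section
/- Let d ≥ 2, x,y ∈ ℝ^d, σ > 0. Define f̄(ξ) := ∫_{S^{d-1}} cos(⟨(√(2ξ)/σ) n, x-y⟩) dπ(n), where π is the uniform probability measure on the unit sphere. Then f̄(ξ) = ∑_{n=0}^∞ β_n ξ^n with β_n = (-‖x-y‖²/(2σ²))^n Γ(d/2)/(Γ(n+1)Γ(d/2+n)). -/
open Real MeasureTheory Set Metric

/-- The uniform probability measure on the unit sphere of `ℝ^d`. -/
noncomputable def uniformSphereMeasure (d : ℕ) :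
    Measure (Metric.sphere (0 : EuclideanSpace ℝ (Fin d)) 1) :=
  ((volume : Measure (EuclideanSpace ℝ (Fin d))).toSphere Set.univ)⁻¹ •
    (volume : Measure (EuclideanSpace ℝ (Fin d))).toSphere

lemma integral_Ioi_rpow_mul_exp_neg_sq {s : ℝ} (hs : 0 < s) :
    ∫ x in Ioi (0:ℝ), x ^ (2*s-1) * Real.exp (-x^2) = Real.Gamma s / 2 := by
  have h := integral_comp_rpow_Ioi_of_pos
    (g := fun y : ℝ => Real.exp (-y) * y ^ (s-1)) (p := 2) zero_lt_two
  have h2 : ∀ x ∈ Ioi (0:ℝ), ((2:ℝ) * x ^ ((2:ℝ) - 1)) •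
      (Real.exp (-(x ^ (2:ℝ))) * (x ^ (2:ℝ)) ^ (s-1))
      = 2 * (x ^ (2*s-1) * Real.exp (-x^2)) := by
    intro x hx
    have hx : (0:ℝ) < x := hx
    have e1 : x ^ ((2:ℝ) : ℝ) = x ^ (2:ℕ) := by
      rw [← Real.rpow_natCast x 2]; norm_num
    have e2 : (x ^ (2:ℕ) : ℝ) ^ (s-1) = x ^ (2*s-2) := by
      rw [← Real.rpow_natCast x 2, ← Real.rpow_mul hx.le]
      congr 1; push_cast; ring
    have e3 : x ^ ((2:ℝ) - 1) = x := by norm_num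
    have e4 : x ^ (2*s-1) = x * x ^ (2*s-2) := by
      rw [show 2*s-1 = 1 + (2*s-2) by ring, Real.rpow_add hx, Real.rpow_one]
    rw [e1, e2, smul_eq_mul, e3, e4]; ring
  rw [setIntegral_congr_fun measurableSet_Ioi h2, integral_const_mul] at h
  rw [← Real.Gamma_eq_integral hs] at h
  linarith

lemma integral_Ioi_pow_mul_exp_neg_sq (m : ℕ) :
    ∫ x in Ioi (0:ℝ), x ^ m * Real.exp (-x^2) = Real.Gamma (((m:ℝ)+1)/2) / 2 := by
  have hs : 0 < ((m:ℝ)+1)/2 := by positivity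
  rw [← integral_Ioi_rpow_mul_exp_neg_sq hs]
  refine setIntegral_congr_fun measurableSet_Ioi fun x hx => ?_
  have : 2*(((m:ℝ)+1)/2)-1 = (m:ℝ) := by ring
  rw [this, Real.rpow_natCast]

lemma integral_pow_mul_exp_neg_sq (k : ℕ) :
    ∫ x : ℝ, x ^ (2*k) * Real.exp (-x^2) = Real.Gamma (k + 1/2) := by
  have h : ∀ x : ℝ, x ^ (2*k) * Real.exp (-x^2) = |x| ^ (2*k) * Real.exp (-|x|^2) := by
    intro x; simp [pow_mul, sq_abs]
  rw [show (fun x : ℝ => x ^ (2*k) * Real.exp (-x^2))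
      = (fun x : ℝ => |x| ^ (2*k) * Real.exp (-|x|^2)) from funext h]
  rw [integral_comp_abs (f := fun x => x ^ (2*k) * Real.exp (-x^2)),
    integral_Ioi_pow_mul_exp_neg_sq]
  have : (((2*k:ℕ):ℝ) + 1)/2 = (k:ℝ) + 1/2 := by push_cast; ring
  rw [this]; ring

lemma gauss_eucl (d k : ℕ) (hd : 0 < d) (e : EuclideanSpace ℝ (Fin d)) (he : ‖e‖ = 1) :
    ∫ x : EuclideanSpace ℝ (Fin d), (inner ℝ x e : ℝ) ^ (2*k) * Real.exp (-‖x‖^2)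
      = Real.Gamma (k + 1/2) * Real.sqrt π ^ (d-1) := by
  set i0 : Fin d := ⟨0, hd⟩
  -- orthonormal basis with b i0 = e
  have hcard : Module.finrank ℝ (EuclideanSpace ℝ (Fin d)) = Fintype.card (Fin d) := by
    simp
  have horth : Orthonormal ℝ (({i0} : Set (Fin d)).restrict (fun _ => e)) := by
    constructor
    · intro i; exact he
    · intro i j hij
      exact absurd (Subtype.ext ((i.2 : i.1 ∈ ({i0} : Set (Fin d))).trans
        (j.2 : j.1 ∈ ({i0} : Set (Fin d))).symm)) hij
  obtain ⟨b, hb⟩ := Orthonormal.exists_orthonormalBasis_extension_of_card_eq hcard horth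
  have hbe : b i0 = e := hb i0 rfl
  -- change of variables by the isometry b.repr.symm
  have mp := LinearIsometryEquiv.measurePreserving (b.repr.symm)

  rw [← mp.integral_comp (b.repr.symm).toHomeomorph.measurableEmbedding
    (fun x : EuclideanSpace ℝ (Fin d) => (inner ℝ x e : ℝ) ^ (2*k) * Real.exp (-‖x‖^2))]
  have h1 : ∀ y : EuclideanSpace ℝ (Fin d),
      (inner ℝ (b.repr.symm y) e : ℝ) = y i0 := by
    intro y
    rw [← hbe, real_inner_comm, ← OrthonormalBasis.repr_apply_apply,
      LinearIsometryEquiv.apply_symm_apply]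
  simp_rw [h1, LinearIsometryEquiv.norm_map]
  -- pass to the product measure
  have mq := (EuclideanSpace.volume_preserving_symm_measurableEquiv_toLp (Fin d)).symm
  rw [← mq.integral_comp (MeasurableEquiv.measurableEmbedding _)
    (fun y : EuclideanSpace ℝ (Fin d) => (y i0) ^ (2*k) * Real.exp (-‖y‖^2))]
  have h2 : ∀ z : Fin d → ℝ,
      ((((MeasurableEquiv.toLp 2 (Fin d → ℝ)).symm).symm z) i0) ^ (2*k)
        * Real.exp (-‖((MeasurableEquiv.toLp 2 (Fin d → ℝ)).symm).symm z‖^2)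
      = ∏ i, ((if i = i0 then (z i) ^ (2*k) else 1) * Real.exp (-(z i)^2)) := by
    intro z
    have hnorm : ‖((MeasurableEquiv.toLp 2 (Fin d → ℝ)).symm).symm z‖^2 = ∑ i, (z i)^2 := by
      rw [EuclideanSpace.norm_eq, Real.sq_sqrt (by positivity)]
      simp [MeasurableEquiv.coe_toLp]
    have happ : ∀ i, (((MeasurableEquiv.toLp 2 (Fin d → ℝ)).symm).symm z) i = z i := by
      intro i; simp [MeasurableEquiv.coe_toLp]
    rw [hnorm, happ]
    rw [Finset.prod_mul_distrib]
    rw [Finset.prod_ite_eq' Finset.univ i0 (fun i => (z i)^(2*k))]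
    rw [← Real.exp_sum]
    simp [Finset.sum_neg_distrib]
  simp_rw [h2]
  rw [volume_pi, integral_fintype_prod_eq_prod (f := fun (i : Fin d) (t : ℝ) =>
    (if i = i0 then t ^ (2*k) else 1) * Real.exp (-t^2))]
  rw [← Finset.mul_prod_erase Finset.univ _ (Finset.mem_univ i0)]
  simp only [if_pos rfl, if_true, eq_self_iff_true]
  rw [integral_pow_mul_exp_neg_sq]
  have h3 : ∀ i ∈ Finset.univ.erase i0,
      (∫ t : ℝ, (if i = i0 then t ^ (2*k) else 1) * Real.exp (-t^2)) = Real.sqrt π := by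
    intro i hi
    rw [Finset.mem_erase] at hi
    simp only [if_neg hi.1, one_mul]
    have := integral_gaussian 1
    simpa using this
  rw [Finset.prod_congr rfl h3, Finset.prod_const, Finset.card_erase_of_mem (Finset.mem_univ i0)]
  simp

lemma polar_eucl (d k : ℕ) (hd : 0 < d) (e : EuclideanSpace ℝ (Fin d)) :
    ∫ x : EuclideanSpace ℝ (Fin d), (inner ℝ x e : ℝ) ^ (2*k) * Real.exp (-‖x‖^2)
      = (∫ n : Metric.sphere (0 : EuclideanSpace ℝ (Fin d)) 1,
          (inner ℝ (n : EuclideanSpace ℝ (Fin d)) e : ℝ) ^ (2*k)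
          ∂ (volume : Measure (EuclideanSpace ℝ (Fin d))).toSphere)
        * (Real.Gamma ((k:ℝ) + (d:ℝ)/2) / 2) := by
  haveI : Nontrivial (EuclideanSpace ℝ (Fin d)) :=
    ⟨⟨EuclideanSpace.single ⟨0, hd⟩ 1, 0,
      fun h0 => by simpa using congrArg (fun v => v ⟨0, hd⟩) h0⟩⟩
  have dimE : Module.finrank ℝ (EuclideanSpace ℝ (Fin d)) = d := finrank_euclideanSpace_fin
  calc
    ∫ x : EuclideanSpace ℝ (Fin d), (inner ℝ x e : ℝ) ^ (2*k) * Real.exp (-‖x‖^2)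
      = ∫ x : ({(0 : EuclideanSpace ℝ (Fin d))}ᶜ : Set (EuclideanSpace ℝ (Fin d))),
          (inner ℝ (x : EuclideanSpace ℝ (Fin d)) e : ℝ) ^ (2*k) * Real.exp (-‖(x : EuclideanSpace ℝ (Fin d))‖^2)
          ∂((volume : Measure (EuclideanSpace ℝ (Fin d))).comap Subtype.val) := by
        rw [integral_subtype_comap (measurableSet_singleton _).compl
          (fun x => (inner ℝ x e : ℝ) ^ (2*k) * Real.exp (-‖x‖^2)), restrict_compl_singleton]
    _ = ∫ p : sphere (0 : EuclideanSpace ℝ (Fin d)) 1 × Ioi (0:ℝ),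
          (inner ℝ (p.1 : EuclideanSpace ℝ (Fin d)) e : ℝ) ^ (2*k)
            * ((p.2 : ℝ) ^ (2*k) * Real.exp (-(p.2:ℝ)^2))
          ∂((volume : Measure (EuclideanSpace ℝ (Fin d))).toSphere.prod
              (Measure.volumeIoiPow (Module.finrank ℝ (EuclideanSpace ℝ (Fin d)) - 1))) := by
        rw [← (volume : Measure (EuclideanSpace ℝ (Fin d))).measurePreserving_homeomorphUnitSphereProd.integral_comp
          (Homeomorph.measurableEmbedding _)
          (fun p : sphere (0 : EuclideanSpace ℝ (Fin d)) 1 × Ioi (0:ℝ) =>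
            (inner ℝ (p.1 : EuclideanSpace ℝ (Fin d)) e : ℝ) ^ (2*k)
              * ((p.2 : ℝ) ^ (2*k) * Real.exp (-(p.2:ℝ)^2)))]
        refine integral_congr_ae (Filter.Eventually.of_forall fun x => ?_)
        have hx : (x : EuclideanSpace ℝ (Fin d)) ≠ 0 := x.2
        have hnx : ‖(x : EuclideanSpace ℝ (Fin d))‖ ≠ 0 := norm_ne_zero_iff.2 hx
        simp only [homeomorphUnitSphereProd_apply_fst_coe, homeomorphUnitSphereProd_apply_snd_coe]
        rw [real_inner_smul_left, mul_pow]
        have : (‖(x : EuclideanSpace ℝ (Fin d))‖⁻¹) ^ (2*k)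
              * ((inner ℝ (x : EuclideanSpace ℝ (Fin d)) e : ℝ)) ^ (2*k)
              * (‖(x : EuclideanSpace ℝ (Fin d))‖ ^ (2*k)
                * Real.exp (-‖(x : EuclideanSpace ℝ (Fin d))‖^2))
            = ((‖(x : EuclideanSpace ℝ (Fin d))‖⁻¹ * ‖(x : EuclideanSpace ℝ (Fin d))‖) ^ (2*k))
              * ((inner ℝ (x : EuclideanSpace ℝ (Fin d)) e : ℝ)) ^ (2*k)
              * Real.exp (-‖(x : EuclideanSpace ℝ (Fin d))‖^2) := by ring
        rw [this, inv_mul_cancel₀ hnx, one_pow, one_mul]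
    _ = (∫ n : sphere (0 : EuclideanSpace ℝ (Fin d)) 1,
            (inner ℝ (n : EuclideanSpace ℝ (Fin d)) e : ℝ) ^ (2*k)
            ∂ (volume : Measure (EuclideanSpace ℝ (Fin d))).toSphere)
          * ∫ r : Ioi (0:ℝ), (r : ℝ) ^ (2*k) * Real.exp (-(r:ℝ)^2)
            ∂(Measure.volumeIoiPow (Module.finrank ℝ (EuclideanSpace ℝ (Fin d)) - 1)) := by
        rw [← integral_prod_mul]
    _ = _ := by
        congr 1
        rw [dimE]
        simp only [Measure.volumeIoiPow, ENNReal.ofReal]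
        rw [integral_withDensity_eq_integral_smul
          ((measurable_subtype_coe.pow_const _).real_toNNReal)]
        rw [integral_subtype_comap measurableSet_Ioi
          (fun a : ℝ => Real.toNNReal (a ^ (d - 1)) • (a ^ (2*k) * Real.exp (-a^2)))]
        rw [setIntegral_congr_fun measurableSet_Ioi
          (g := fun a : ℝ => a ^ (2*k + (d-1)) * Real.exp (-a^2)) (fun x hx => ?_)]
        · rw [integral_Ioi_pow_mul_exp_neg_sq]
          congr 2
          have : (2*k + (d-1) : ℕ) = 2*k + d - 1 := by omega
          rw [this]
          push_cast [Nat.cast_sub (by omega : 1 ≤ 2*k + d)]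
          ring
        · have hx : (0:ℝ) < x := hx
          dsimp only
          rw [NNReal.smul_def, Real.coe_toNNReal _ (pow_nonneg hx.le _), smul_eq_mul, pow_add]
          ring

lemma sphere_moment_toSphere (d k : ℕ) (hd : 0 < d) (e : EuclideanSpace ℝ (Fin d))
    (he : ‖e‖ = 1) :
    ∫ n : Metric.sphere (0 : EuclideanSpace ℝ (Fin d)) 1,
        (inner ℝ (n : EuclideanSpace ℝ (Fin d)) e : ℝ) ^ (2*k)
        ∂ (volume : Measure (EuclideanSpace ℝ (Fin d))).toSphere
      = 2 * Real.Gamma (k + 1/2) * Real.sqrt π ^ (d-1) / Real.Gamma ((k:ℝ) + (d:ℝ)/2) := by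
  have hΓ : 0 < Real.Gamma ((k:ℝ) + (d:ℝ)/2) := Real.Gamma_pos_of_pos (by positivity)
  have h := (polar_eucl d k hd e).symm.trans (gauss_eucl d k hd e he)
  field_simp at h ⊢
  linarith

lemma toSphere_univ_toReal (d : ℕ) (hd : 0 < d) :
    ((volume : Measure (EuclideanSpace ℝ (Fin d))).toSphere Set.univ).toReal
      = 2 * Real.sqrt π ^ d / Real.Gamma ((d:ℝ)/2) := by
  have e : EuclideanSpace ℝ (Fin d) := EuclideanSpace.single ⟨0, hd⟩ 1
  have he : ‖(EuclideanSpace.single (⟨0, hd⟩ : Fin d) (1:ℝ))‖ = 1 := by simp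
  have h := sphere_moment_toSphere d 0 hd _ he
  simp only [Nat.cast_zero, mul_zero, pow_zero, zero_add] at h
  rw [integral_const, smul_eq_mul, mul_one, measureReal_def] at h
  rw [h, Real.Gamma_one_half_eq]
  have hpow : Real.sqrt π ^ d = Real.sqrt π ^ (d-1) * Real.sqrt π := by
    rw [← pow_succ, Nat.sub_add_cancel hd]
  rw [hpow]; ring

lemma sphere_moment_uniform (d k : ℕ) (hd : 0 < d) (u : EuclideanSpace ℝ (Fin d)) :
    ∫ n : Metric.sphere (0 : EuclideanSpace ℝ (Fin d)) 1,
        (inner ℝ (n : EuclideanSpace ℝ (Fin d)) u : ℝ) ^ (2*k)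
        ∂ (uniformSphereMeasure d)
      = ‖u‖^(2*k) * (Real.Gamma (k + 1/2) * Real.Gamma ((d:ℝ)/2)
          / (Real.sqrt π * Real.Gamma ((d:ℝ)/2 + k))) := by
  have hΓ : 0 < Real.Gamma ((k:ℝ) + (d:ℝ)/2) := Real.Gamma_pos_of_pos (by positivity)
  have hΓd : 0 < Real.Gamma ((d:ℝ)/2) := Real.Gamma_pos_of_pos (by positivity)
  have hπ : 0 < Real.sqrt π := Real.sqrt_pos.2 Real.pi_pos
  have hc : ((volume : Measure (EuclideanSpace ℝ (Fin d))).toSphere Set.univ).toReal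
      = 2 * Real.sqrt π ^ d / Real.Gamma ((d:ℝ)/2) := toSphere_univ_toReal d hd
  have hcpos : 0 < ((volume : Measure (EuclideanSpace ℝ (Fin d))).toSphere Set.univ).toReal := by
    rw [hc]; positivity
  have hcne : (volume : Measure (EuclideanSpace ℝ (Fin d))).toSphere Set.univ ≠ 0 := by
    intro h0; rw [h0] at hcpos; simp at hcpos
  have hcfin : (volume : Measure (EuclideanSpace ℝ (Fin d))).toSphere Set.univ ≠ ⊤ :=
    measure_ne_top _ _
  -- unfold the uniform measure
  have hsmul : ∀ f : Metric.sphere (0 : EuclideanSpace ℝ (Fin d)) 1 → ℝ,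
      ∫ n, f n ∂(uniformSphereMeasure d)
        = (((volume : Measure (EuclideanSpace ℝ (Fin d))).toSphere Set.univ).toReal)⁻¹
          * ∫ n, f n ∂(volume : Measure (EuclideanSpace ℝ (Fin d))).toSphere := by
    intro f
    rw [uniformSphereMeasure, integral_smul_measure, ENNReal.toReal_inv, smul_eq_mul]
  rcases eq_or_ne u 0 with rfl | hu
  · rcases Nat.eq_zero_or_pos k with rfl | hk
    · simp only [mul_zero, pow_zero]
      rw [hsmul fun _ => (1:ℝ), integral_const, smul_eq_mul, mul_one, measureReal_def,
        inv_mul_cancel₀ hcpos.ne']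
      rw [Nat.cast_zero, add_zero, zero_add, Real.Gamma_one_half_eq]
      field_simp
    · have : ∀ n : Metric.sphere (0 : EuclideanSpace ℝ (Fin d)) 1,
          (inner ℝ (n : EuclideanSpace ℝ (Fin d)) (0 : EuclideanSpace ℝ (Fin d)) : ℝ) ^ (2*k)
            = 0 := by
        intro n; rw [inner_zero_right]; exact zero_pow (by omega)
      simp only [this, norm_zero]
      rw [integral_zero, zero_pow (by omega), zero_mul]
  · set e : EuclideanSpace ℝ (Fin d) := ‖u‖⁻¹ • u with hedef
    have hnu : ‖u‖ ≠ 0 := norm_ne_zero_iff.2 hu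
    have he : ‖e‖ = 1 := by
      rw [hedef, norm_smul, norm_inv, norm_norm, inv_mul_cancel₀ hnu]
    have hrw : ∀ n : Metric.sphere (0 : EuclideanSpace ℝ (Fin d)) 1,
        (inner ℝ (n : EuclideanSpace ℝ (Fin d)) u : ℝ) ^ (2*k)
          = ‖u‖^(2*k) * (inner ℝ (n : EuclideanSpace ℝ (Fin d)) e : ℝ) ^ (2*k) := by
      intro n
      rw [hedef, real_inner_smul_right, mul_pow, ← mul_assoc]
      rw [← mul_pow, mul_inv_cancel₀ hnu, one_pow, one_mul]
    simp only [hrw]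
    rw [hsmul, integral_const_mul, sphere_moment_toSphere d k hd e he, hc]
    have h1 : Real.Gamma ((d:ℝ)/2 + k) = Real.Gamma ((k:ℝ) + (d:ℝ)/2) := by rw [add_comm]
    rw [h1]
    have hpow : Real.sqrt π ^ d = Real.sqrt π ^ (d-1) * Real.sqrt π := by
      rw [← pow_succ, Nat.sub_add_cancel hd]
    rw [hpow]
    field_simp

lemma uniformSphereMeasure_univ (d : ℕ) (hd : 0 < d) :
    uniformSphereMeasure d Set.univ = 1 := by
  have hcpos : 0 < ((volume : Measure (EuclideanSpace ℝ (Fin d))).toSphere Set.univ).toReal := by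
    rw [toSphere_univ_toReal d hd]
    have h1 : 0 < Real.Gamma ((d:ℝ)/2) := Real.Gamma_pos_of_pos (by positivity)
    have h2 : 0 < Real.sqrt π := Real.sqrt_pos.2 Real.pi_pos
    positivity
  have hcne : (volume : Measure (EuclideanSpace ℝ (Fin d))).toSphere Set.univ ≠ 0 := by
    intro h0; rw [h0] at hcpos; simp at hcpos
  have hcfin : (volume : Measure (EuclideanSpace ℝ (Fin d))).toSphere Set.univ ≠ ⊤ :=
    measure_ne_top _ _
  rw [uniformSphereMeasure, Measure.smul_apply, smul_eq_mul, ENNReal.inv_mul_cancel hcne hcfin]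

/-- The spherical average `f̄(ξ) = ∫_{S^{d-1}} cos⟨(√(2ξ)/σ) n, x-y⟩ dπ(n)` has the
power series expansion `∑ β_n ξ^n` with
`β_n = (-‖x-y‖²/(2σ²))^n Γ(d/2)/(Γ(n+1)Γ(d/2+n))`, for every `ξ ≥ 0`. -/
theorem spherical_average_eq_tsum (d : ℕ) (hd : 2 ≤ d)
    (x y : EuclideanSpace ℝ (Fin d)) (σ : ℝ) (hσ : 0 < σ) (ξ : ℝ) (hξ : 0 ≤ ξ) :
    (∫ n : Metric.sphere (0 : EuclideanSpace ℝ (Fin d)) 1,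
        Real.cos (inner ℝ ((Real.sqrt (2 * ξ) / σ) • (n : EuclideanSpace ℝ (Fin d))) (x - y) : ℝ)
        ∂(uniformSphereMeasure d)) =
      ∑' n : ℕ, (-(‖x - y‖ ^ 2 / (2 * σ ^ 2))) ^ n * Real.Gamma ((d : ℝ) / 2) /
        (Real.Gamma ((n : ℝ) + 1) * Real.Gamma ((d : ℝ) / 2 + (n : ℝ))) * ξ ^ n := by
  have hd0 : 0 < d := by omega
  haveI hprob : IsProbabilityMeasure (uniformSphereMeasure d) :=
    ⟨uniformSphereMeasure_univ d hd0⟩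
  set a : ℝ := Real.sqrt (2 * ξ) / σ with ha
  set u : EuclideanSpace ℝ (Fin d) := x - y with hu
  set F : ℕ → Metric.sphere (0 : EuclideanSpace ℝ (Fin d)) 1 → ℝ :=
    fun k n => (-1)^k * (a * (inner ℝ (n : EuclideanSpace ℝ (Fin d)) u : ℝ))^(2*k) / ((2*k).factorial : ℝ)
    with hF
  have hcos : ∀ n : Metric.sphere (0 : EuclideanSpace ℝ (Fin d)) 1,
      Real.cos (inner ℝ (a • (n : EuclideanSpace ℝ (Fin d))) u : ℝ) = ∑' k, F k n := by
    intro n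
    rw [real_inner_smul_left, Real.cos_eq_tsum]
  have hbound : ∀ k (n : Metric.sphere (0 : EuclideanSpace ℝ (Fin d)) 1),
      ‖F k n‖ ≤ (|a| * ‖u‖)^(2*k) / ((2*k).factorial : ℝ) := by
    intro k n
    have hip : |(inner ℝ (n : EuclideanSpace ℝ (Fin d)) u : ℝ)| ≤ ‖u‖ := by
      calc |(inner ℝ (n : EuclideanSpace ℝ (Fin d)) u : ℝ)|
          ≤ ‖(n : EuclideanSpace ℝ (Fin d))‖ * ‖u‖ := abs_real_inner_le_norm _ _
        _ = ‖u‖ := by rw [mem_sphere_zero_iff_norm.1 n.2, one_mul]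
    have h1 : |a * (inner ℝ (n : EuclideanSpace ℝ (Fin d)) u : ℝ)| ≤ |a| * ‖u‖ := by
      rw [abs_mul]
      exact mul_le_mul_of_nonneg_left hip (abs_nonneg a)
    have heq : ‖F k n‖ = |a * (inner ℝ (n : EuclideanSpace ℝ (Fin d)) u : ℝ)|^(2*k)
        / ((2*k).factorial : ℝ) := by
      rw [hF]
      dsimp only
      rw [Real.norm_eq_abs, abs_div, abs_mul, abs_pow, abs_pow, abs_neg, abs_one, one_pow,
        one_mul, Nat.abs_cast]
    rw [heq]
    gcongr

  have hcont : ∀ k, Continuous (F k) := by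
    intro k
    apply Continuous.div_const
    exact continuous_const.mul ((continuous_const.mul
      (continuous_subtype_val.inner continuous_const)).pow _)
  have hsummable : Summable (fun k => (|a| * ‖u‖)^(2*k) / ((2*k).factorial : ℝ)) := by
    have h := Real.summable_pow_div_factorial (|a| * ‖u‖)
    have hinj : Function.Injective (fun k : ℕ => 2*k) := fun m n h => by dsimp at h; omega
    have := h.comp_injective hinj
    exact this
  have hswap : (∫ n : Metric.sphere (0 : EuclideanSpace ℝ (Fin d)) 1,
        (∑' k, F k n) ∂(uniformSphereMeasure d)) = ∑' k, ∫ n, F k n ∂(uniformSphereMeasure d) := by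
    rw [integral_tsum (fun k => (hcont k).aestronglyMeasurable) ?_]
    have hb : ∀ k, (∫⁻ n, ‖F k n‖₊ ∂(uniformSphereMeasure d))
        ≤ ENNReal.ofReal ((|a| * ‖u‖)^(2*k) / ((2*k).factorial : ℝ)) := by
      intro k
      calc ∫⁻ n, ‖F k n‖₊ ∂(uniformSphereMeasure d)
          ≤ ∫⁻ _, ENNReal.ofReal ((|a| * ‖u‖)^(2*k) / ((2*k).factorial : ℝ)) ∂(uniformSphereMeasure d) := by
            apply lintegral_mono
            intro n
            dsimp only
            rw [← enorm_eq_nnnorm, ← ofReal_norm]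
            exact ENNReal.ofReal_le_ofReal (hbound k n)
        _ = ENNReal.ofReal ((|a| * ‖u‖)^(2*k) / ((2*k).factorial : ℝ)) := by
            rw [lintegral_const, measure_univ, mul_one]
    refine ne_top_of_le_ne_top ?_ (ENNReal.tsum_le_tsum hb)
    rw [← ENNReal.ofReal_tsum_of_nonneg (fun k => by positivity) hsummable]
    exact ENNReal.ofReal_ne_top
  simp_rw [hcos]
  rw [hswap]
  refine tsum_congr fun k => ?_
  have hterm : ∀ n : Metric.sphere (0 : EuclideanSpace ℝ (Fin d)) 1,
      F k n = ((-1)^k * a^(2*k) / ((2*k).factorial : ℝ))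
        * (inner ℝ (n : EuclideanSpace ℝ (Fin d)) u : ℝ)^(2*k) := by
    intro n; rw [hF]; dsimp only; rw [mul_pow]; ring
  simp_rw [hterm]
  rw [integral_const_mul, sphere_moment_uniform d k hd0 u]
  -- now pure algebra
  have ha2 : a^2 = 2*ξ/σ^2 := by
    rw [ha, div_pow, Real.sq_sqrt (by linarith)]
  have hfac : Real.Gamma ((k:ℝ) + 1/2) = ((2*k).factorial : ℝ) * ((2:ℝ)^(2*k))⁻¹ * Real.sqrt π / (k.factorial : ℝ) := by
    have hdup := Real.Gamma_mul_Gamma_add_half ((k:ℝ) + 1/2)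
    have h1 : ((k:ℝ) + 1/2) + 1/2 = (k:ℝ) + 1 := by ring
    have h2 : 2*((k:ℝ)+1/2) = ((2*k : ℕ):ℝ) + 1 := by push_cast; ring
    rw [h1, h2, Real.Gamma_nat_eq_factorial, Real.Gamma_nat_eq_factorial] at hdup
    have h3 : (2:ℝ) ^ (1 - (((2*k : ℕ):ℝ) + 1)) = ((2:ℝ)^(2*k))⁻¹ := by
      rw [show 1 - (((2*k : ℕ):ℝ)+1) = -((2*k : ℕ):ℝ) by push_cast; ring,
        Real.rpow_neg (by norm_num), Real.rpow_natCast]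
    rw [h3] at hdup
    have hk : (0:ℝ) < (k.factorial : ℝ) := by positivity
    field_simp at hdup ⊢
    linarith
  have hΓ1 : Real.Gamma ((k:ℝ) + 1) = (k.factorial : ℝ) := Real.Gamma_nat_eq_factorial k
  rw [hfac, hΓ1]
  have hπ : 0 < Real.sqrt π := Real.sqrt_pos.2 Real.pi_pos
  have hfk : (0:ℝ) < (k.factorial : ℝ) := by positivity
  have hf2k : (0:ℝ) < ((2*k).factorial : ℝ) := by positivity
  have hΓdk : 0 < Real.Gamma ((d:ℝ)/2 + k) := Real.Gamma_pos_of_pos (by positivity)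
  have hΓd : 0 < Real.Gamma ((d:ℝ)/2) := Real.Gamma_pos_of_pos (by positivity)
  -- a^(2k) = (2ξ/σ²)^k, ‖u‖^(2k) = (‖u‖²)^k
  have hA : a^(2*k) = (2*ξ/σ^2)^k := by rw [pow_mul, ha2]
  have hU : ‖u‖^(2*k) = (‖u‖^2)^k := by rw [pow_mul]
  rw [hA, hU]
  have h2 : ((2:ℝ)^(2*k)) = 2^k * 2^k := by rw [two_mul, pow_add]
  rw [h2]
  have hσ' : σ ≠ 0 := hσ.ne'
  have h4 : ((2:ℝ))^k ≠ 0 := by positivity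
  field_simp
  have h5 : (-1/2:ℝ)^k * 2^(k*2) = (-1)^k * 2^k := by
    rw [show (-1/2:ℝ) = -1 * 2⁻¹ by norm_num, mul_pow, mul_two, pow_add, inv_pow, mul_assoc,
      inv_mul_cancel_left₀ h4]
  linear_combination (-(ξ ^ k * σ⁻¹ ^ (k * 2) * ‖u‖ ^ (k * 2))) * h5
end

section
/- Let d ≥ 2, x, y ∈ ℝ^d, σ > 0, and c := ‖x-y‖/(√2 σ). Define the coefficients γ_m := ⟨f̄, ℓ_m^α⟩ in the orthonormal basis of normalized generalized Laguerre polynomials ℓ_m^α with α = d/2 - 1, where f̄(ξ) = ∑_{n=0}^∞ (-c²)^n Γ(d/2) ξ^n /(Γ(n+1)Γ(d/2+n)) and the inner product is with respect to p(ξ) = ξ^{d/2-1} e^{-ξ}/Γ(d/2) on [0,∞). Then |γ_m| ≤ √(1/(m! Γ(m+d/2))) c^{2m} e^{-c²}; in fact γ_m = (-1)^m √(1/(m! Γ(m+d/2))) c^{2m} e^{-c²} up to sign, so |γ_m| equals the stated bound. -/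
open Real MeasureTheory

/-- The generalized Laguerre polynomial `L_m^α` for real parameter `α`. -/
noncomputable def genLaguerreR (m : ℕ) (α : ℝ) (x : ℝ) : ℝ :=
  ∑ i ∈ Finset.range (m + 1),
    ((-x) ^ i / (Nat.factorial i)) *
      ((∏ j ∈ Finset.range (m - i), ((m : ℝ) + α - (j : ℝ))) / (Nat.factorial (m - i)))

/-- The normalized generalized Laguerre polynomial `ℓ_m^α = √(m!/Γ(m+α+1)) L_m^α`. -/
noncomputable def normGenLaguerre (m : ℕ) (α : ℝ) (x : ℝ) : ℝ :=
  Real.sqrt ((Nat.factorial m) / Real.Gamma ((m : ℝ) + α + 1)) * genLaguerreR m α x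

open Finset

lemma prodDiff (X : ℝ) : ∀ i : ℕ,
    (∏ k ∈ range (i+1), (X + 1 + k)) - ∏ k ∈ range (i+1), (X + k)
      = (i+1) * ∏ k ∈ range i, (X + 1 + k) := by
  intro i
  induction i with
  | zero => simp
  | succ i ih =>
    rw [prod_range_succ, prod_range_succ (f := fun k => X + (k:ℝ))]
    have h1 : (∏ k ∈ range (i+1), (X + (k:ℝ))) =
        (∏ k ∈ range (i+1), (X + 1 + (k:ℝ))) - (i+1) * ∏ k ∈ range i, (X + 1 + k) := by
      linarith [ih]
    rw [h1, prod_range_succ (f := fun k => X + 1 + (k:ℝ))]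
    push_cast
    ring

lemma descDiff (z : ℝ) : ∀ M : ℕ,
    (∏ k ∈ range (M+1), (z + 1 - k)) = (∏ k ∈ range (M+1), (z - k)) + (M+1) * ∏ k ∈ range M, (z - k) := by
  intro M
  induction M with
  | zero => norm_num
  | succ M ih =>
    have e1 : (∏ k ∈ range (M+1), (z - (k:ℝ))) = (∏ k ∈ range M, (z - (k:ℝ))) * (z - M) :=
      prod_range_succ _ _
    have e2 : (∏ k ∈ range (M+1+1), (z - (k:ℝ)))
        = (∏ k ∈ range M, (z - (k:ℝ))) * (z - M) * (z - (M+1)) := by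
      rw [prod_range_succ, e1]; push_cast; ring
    have e3 : (∏ k ∈ range (M+1+1), (z + 1 - (k:ℝ)))
        = (∏ k ∈ range (M+1), (z + 1 - (k:ℝ))) * (z + 1 - (M+1)) := by
      rw [prod_range_succ]; push_cast; ring
    rw [e3, ih, e2, e1]
    push_cast
    ring

lemma keyIdent : ∀ (n : ℕ) (m : ℕ) (b : ℝ),
    ∑ i ∈ range (m+1), (-1:ℝ)^i * (m.choose i) *
        (∏ k ∈ range i, (b + n + k)) * (∏ k ∈ Ico i m, (b + k))
      = (-1)^m * ∏ k ∈ range m, ((n:ℝ) - k) := by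
  intro n
  induction n with
  | zero =>
    intro m b
    have h : ∀ i ∈ range (m+1), (-1:ℝ)^i * (m.choose i) *
        (∏ k ∈ range i, (b + ((0:ℕ):ℝ) + k)) * (∏ k ∈ Ico i m, (b + k))
        = ((-1:ℝ)^i * (m.choose i)) * (∏ k ∈ range m, (b + k)) := by
      intro i hi
      rw [mem_range] at hi
      have him : i ≤ m := Nat.lt_succ_iff.mp hi
      rw [mul_assoc ((-1:ℝ)^i * (m.choose i))]
      congr 1
      rw [← prod_range_mul_prod_Ico (fun k => b + (k:ℝ)) him]
      norm_num
    rw [sum_congr rfl h, ← sum_mul]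
    have hz : ∑ i ∈ range (m+1), ((-1:ℝ)^i * (m.choose i)) = if m = 0 then 1 else 0 := by
      have := Int.alternating_sum_range_choose (n := m)
      have h2 := congrArg (fun z : ℤ => (z : ℝ)) this
      push_cast at h2
      rw [h2]
    rw [hz]
    rcases Nat.eq_zero_or_pos m with hm | hm
    · subst hm; simp
    · rw [if_neg (Nat.pos_iff_ne_zero.mp hm), zero_mul]
      symm
      rw [mul_eq_zero]
      right
      exact prod_eq_zero (mem_range.mpr hm) (by norm_num)
  | succ n ih =>
    intro m b
    match m with
    | 0 => simp
    | M + 1 =>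
      set Sold := ∑ i ∈ range (M+1+1), (-1:ℝ)^i * ((M+1).choose i) *
          (∏ k ∈ range i, (b + n + k)) * (∏ k ∈ Ico i (M+1), (b + k)) with hSold
      have hdiff : (∑ i ∈ range (M+1+1), (-1:ℝ)^i * ((M+1).choose i) *
          (∏ k ∈ range i, (b + ((n+1:ℕ):ℝ) + k)) * (∏ k ∈ Ico i (M+1), (b + k))) - Sold
          = -((M:ℝ)+1) * ∑ j ∈ range (M+1), (-1:ℝ)^j * (M.choose j) *
              (∏ k ∈ range j, ((b+1) + n + k)) * (∏ k ∈ Ico j M, ((b+1) + k)) := by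
        rw [hSold, ← sum_sub_distrib]
        have hterm : ∀ i ∈ range (M+1+1),
            ((-1:ℝ)^i * ((M+1).choose i) * (∏ k ∈ range i, (b + ((n+1:ℕ):ℝ) + k)) *
              (∏ k ∈ Ico i (M+1), (b + k)))
            - ((-1:ℝ)^i * ((M+1).choose i) * (∏ k ∈ range i, (b + n + k)) *
              (∏ k ∈ Ico i (M+1), (b + k)))
            = ((-1:ℝ)^i * ((M+1).choose i) * (∏ k ∈ Ico i (M+1), (b + k))) *
              ((∏ k ∈ range i, ((b+(n:ℝ)) + 1 + k)) - (∏ k ∈ range i, ((b+(n:ℝ)) + k))) := by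
          intro i _
          have : ∀ k : ℕ, b + ((n+1:ℕ):ℝ) + k = (b+(n:ℝ)) + 1 + k := by intro k; push_cast; ring
          rw [prod_congr rfl (fun k _ => this k)]
          ring
        rw [sum_congr rfl hterm, Finset.sum_range_succ']
        simp only [prod_range_zero, sub_self, mul_zero, add_zero]
        rw [mul_sum]
        refine sum_congr rfl ?_
        intro j hj
        rw [mem_range] at hj
        rw [prodDiff (b+(n:ℝ)) j]
        have hchoose : ((j:ℝ)+1) * ((M+1).choose (j+1)) = ((M:ℝ)+1) * (M.choose j) := by
          have := Nat.add_one_mul_choose_eq M j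
          have h2 := congrArg (fun z : ℕ => (z : ℝ)) this
          push_cast at h2
          linarith [h2]
        have hIco : (∏ k ∈ Ico (j+1) (M+1), (b + (k:ℝ))) = ∏ k ∈ Ico j M, ((b+1) + (k:ℝ)) := by
          rw [prod_Ico_eq_prod_range, prod_Ico_eq_prod_range]
          have hMj : M + 1 - (j+1) = M - j := by omega
          rw [hMj]
          refine prod_congr rfl ?_
          intro t _
          push_cast
          ring
        have hrange : (∏ k ∈ range j, ((b+(n:ℝ)) + 1 + k)) = ∏ k ∈ range j, ((b+1) + (n:ℝ) + k) := by
          refine prod_congr rfl ?_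
          intro t _
          ring
        rw [hIco, hrange]
        have : ((-1:ℝ))^(j+1) = -(-1:ℝ)^j := by ring
        rw [this]
        push_cast
        linear_combination (-(-1:ℝ)^j * (∏ k ∈ Ico j M, (b + 1 + (k:ℝ))) *
          (∏ k ∈ range j, (b + 1 + (n:ℝ) + (k:ℝ)))) * hchoose
      have hold : Sold = (-1:ℝ)^(M+1) * ∏ k ∈ range (M+1), ((n:ℝ) - k) := ih (M+1) b
      have hT := ih M (b+1)
      have hprod : (∏ k ∈ range (M+1), (((n+1:ℕ):ℝ) - k)) = ∏ k ∈ range (M+1), ((n:ℝ) + 1 - k) :=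
        prod_congr rfl (fun k _ => by push_cast; ring)
      have hgoal : (∑ i ∈ range (M+1+1), (-1:ℝ)^i * ((M+1).choose i) *
          (∏ k ∈ range i, (b + ((n+1:ℕ):ℝ) + k)) * (∏ k ∈ Ico i (M+1), (b + k)))
          = (-1:ℝ)^(M+1) * ∏ k ∈ range (M+1), (((n+1:ℕ):ℝ) - k) := by
        rw [hprod, descDiff (n:ℝ) M]
        rw [hT] at hdiff
        rw [hold] at hdiff
        have := sub_eq_iff_eq_add.mp hdiff
        rw [this]
        ring
      exact hgoal


lemma gammaProd {x : ℝ} (hx : 0 < x) (i : ℕ) :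
    Real.Gamma (x + i) = Real.Gamma x * ∏ k ∈ range i, (x + k) := by
  induction i with
  | zero => simp
  | succ i ih =>
    have hxi : (x + (i:ℝ)) ≠ 0 := by positivity
    rw [show x + ((i+1:ℕ):ℝ) = (x + (i:ℝ)) + 1 by push_cast; ring, Real.Gamma_add_one hxi, ih,
      prod_range_succ]
    ring

lemma momentInt {s : ℝ} (hs : 0 < s) :
    ∫ ξ in Set.Ioi (0:ℝ), ξ ^ (s - 1) * Real.exp (-ξ) = Real.Gamma s := by
  rw [Real.Gamma_eq_integral hs]
  exact setIntegral_congr_fun measurableSet_Ioi fun x _ => mul_comm _ _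

lemma momentIntegrable {s : ℝ} (hs : 0 < s) :
    IntegrableOn (fun ξ : ℝ => ξ ^ (s-1) * Real.exp (-ξ)) (Set.Ioi 0) :=
  (Real.GammaIntegral_convergent hs).congr_fun (fun x _ => mul_comm _ _) measurableSet_Ioi

lemma lagProd (m i : ℕ) (him : i ≤ m) (α : ℝ) :
    (∏ j ∈ range (m - i), ((m:ℝ) + α - j)) = ∏ k ∈ Ico i m, (α + 1 + k) := by
  rw [← Finset.prod_range_reflect (fun j => (m:ℝ) + α - j) (m - i), prod_Ico_eq_prod_range]
  refine prod_congr rfl ?_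
  intro t ht
  rw [mem_range] at ht
  have h1 : m - i - 1 - t = m - (i+1+t) := by omega
  have h2 : i + 1 + t ≤ m := by omega
  simp only [h1]
  rw [Nat.cast_sub h2]
  push_cast
  ring

lemma lagInt (m n : ℕ) {A : ℝ} (hA : 0 < A) :
    ∫ ξ in Set.Ioi (0:ℝ), ξ ^ (n:ℕ) * genLaguerreR m (A - 1) ξ * (ξ ^ (A - 1) * Real.exp (-ξ))
      = Real.Gamma ((n:ℝ) + A) * ((-1:ℝ)^m * ∏ k ∈ range m, ((n:ℝ) - k)) / (m.factorial) := by
  have hpt : Set.EqOn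
      (fun ξ : ℝ => ξ ^ (n:ℕ) * genLaguerreR m (A - 1) ξ * (ξ ^ (A - 1) * Real.exp (-ξ)))
      (fun ξ : ℝ => ∑ i ∈ range (m+1),
        ((-1:ℝ)^i / (Nat.factorial i) *
          ((∏ j ∈ range (m - i), ((m:ℝ) + (A-1) - j)) / (Nat.factorial (m - i)))) *
          (ξ ^ (((n:ℝ) + i + A) - 1) * Real.exp (-ξ)))
      (Set.Ioi 0) := by
    intro ξ hξ
    rw [Set.mem_Ioi] at hξ
    simp only [genLaguerreR]
    rw [mul_sum, sum_mul]
    refine sum_congr rfl ?_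
    intro i _
    have hrp : (ξ:ℝ) ^ (n:ℕ) * ξ ^ (i:ℕ) * ξ ^ (A - 1) = ξ ^ (((n:ℝ) + i + A) - 1) := by
      rw [← Real.rpow_natCast ξ n, ← Real.rpow_natCast ξ i, ← Real.rpow_add hξ,
        ← Real.rpow_add hξ]
      congr 1
      ring
    have hneg : (-ξ) ^ i = (-1:ℝ)^i * ξ^i := by
      rw [neg_eq_neg_one_mul, mul_pow]
    rw [hneg, ← hrp]
    ring
  rw [setIntegral_congr_fun measurableSet_Ioi hpt]
  have hint : ∀ i ∈ range (m+1), IntegrableOn (fun ξ : ℝ =>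
      ((-1:ℝ)^i / (Nat.factorial i) *
        ((∏ j ∈ range (m - i), ((m:ℝ) + (A-1) - j)) / (Nat.factorial (m - i)))) *
        (ξ ^ (((n:ℝ) + i + A) - 1) * Real.exp (-ξ))) (Set.Ioi 0) := by
    intro i _
    exact (momentIntegrable (by positivity : (0:ℝ) < (n:ℝ) + i + A)).const_mul _
  rw [integral_finset_sum _ hint]
  have heval : ∀ i ∈ range (m+1),
      (∫ ξ in Set.Ioi (0:ℝ),
        ((-1:ℝ)^i / (Nat.factorial i) *
          ((∏ j ∈ range (m - i), ((m:ℝ) + (A-1) - j)) / (Nat.factorial (m - i)))) *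
          (ξ ^ (((n:ℝ) + i + A) - 1) * Real.exp (-ξ)))
      = (Real.Gamma ((n:ℝ) + A) / (m.factorial)) *
          ((-1:ℝ)^i * (m.choose i) * (∏ k ∈ range i, (A + (n:ℝ) + k)) *
            (∏ k ∈ Ico i m, (A + k))) := by
    intro i hi
    have him : i ≤ m := Nat.lt_succ_iff.mp (mem_range.mp hi)
    rw [MeasureTheory.integral_const_mul, momentInt (by positivity : (0:ℝ) < (n:ℝ) + i + A)]
    rw [lagProd m i him (A-1)]
    have hIco : (∏ k ∈ Ico i m, ((A-1) + 1 + (k:ℝ))) = ∏ k ∈ Ico i m, (A + (k:ℝ)) :=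
      prod_congr rfl (fun k _ => by ring)
    have hGam : Real.Gamma ((n:ℝ) + i + A) =
        Real.Gamma ((n:ℝ) + A) * ∏ k ∈ range i, (A + (n:ℝ) + k) := by
      have h0 : (0:ℝ) < (n:ℝ) + A := by positivity
      have hg := gammaProd h0 i
      rw [show (n:ℝ) + i + A = ((n:ℝ) + A) + (i:ℝ) by ring, hg]
      congr 1
      exact prod_congr rfl (fun k _ => by ring)
    rw [hIco, hGam]
    have hfact : ((m.choose i : ℝ)) * (Nat.factorial i) * (Nat.factorial (m - i))
        = (Nat.factorial m) := by
      exact_mod_cast congrArg (fun z : ℕ => (z:ℝ)) (Nat.choose_mul_factorial_mul_factorial him)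
    have hi0 : ((Nat.factorial i : ℝ)) ≠ 0 := by positivity
    have hmi0 : ((Nat.factorial (m-i) : ℝ)) ≠ 0 := by positivity
    have hm0 : ((Nat.factorial m : ℝ)) ≠ 0 := by positivity
    have hch : ((m.choose i : ℝ)) = (m.factorial : ℝ) / ((i.factorial : ℝ) * ((m-i).factorial : ℝ)) := by
      field_simp
      linarith [hfact]
    rw [hch]
    field_simp
  rw [sum_congr rfl heval, ← mul_sum]
  have hkey : ∑ i ∈ range (m+1), ((-1:ℝ)^i * (m.choose i) *
      (∏ k ∈ range i, (A + (n:ℝ) + k)) * (∏ k ∈ Ico i m, (A + k)))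
      = (-1:ℝ)^m * ∏ k ∈ range m, ((n:ℝ) - k) := keyIdent n m A
  rw [hkey]
  ring


lemma lagEqOn (m n : ℕ) (A : ℝ) : Set.EqOn
    (fun ξ : ℝ => ξ ^ (n:ℕ) * genLaguerreR m (A - 1) ξ * (ξ ^ (A - 1) * Real.exp (-ξ)))
    (fun ξ : ℝ => ∑ i ∈ range (m+1),
      ((-1:ℝ)^i / (Nat.factorial i) *
        ((∏ j ∈ range (m - i), ((m:ℝ) + (A-1) - j)) / (Nat.factorial (m - i)))) *
        (ξ ^ (((n:ℝ) + i + A) - 1) * Real.exp (-ξ)))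
    (Set.Ioi 0) := by
  intro ξ hξ
  rw [Set.mem_Ioi] at hξ
  simp only [genLaguerreR]
  rw [mul_sum, sum_mul]
  refine sum_congr rfl ?_
  intro i _
  have hrp : (ξ:ℝ) ^ (n:ℕ) * ξ ^ (i:ℕ) * ξ ^ (A - 1) = ξ ^ (((n:ℝ) + i + A) - 1) := by
    rw [← Real.rpow_natCast ξ n, ← Real.rpow_natCast ξ i, ← Real.rpow_add hξ,
      ← Real.rpow_add hξ]
    congr 1
    ring
  have hneg : (-ξ) ^ i = (-1:ℝ)^i * ξ^i := by
    rw [neg_eq_neg_one_mul, mul_pow]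
  rw [hneg, ← hrp]
  ring

lemma lagIntegrable (m n : ℕ) {A : ℝ} (hA : 0 < A) :
    IntegrableOn (fun ξ : ℝ => ξ ^ (n:ℕ) * genLaguerreR m (A - 1) ξ *
      (ξ ^ (A - 1) * Real.exp (-ξ))) (Set.Ioi 0) := by
  have hint : IntegrableOn (fun ξ : ℝ => ∑ i ∈ range (m+1),
      ((-1:ℝ)^i / (Nat.factorial i) *
        ((∏ j ∈ range (m - i), ((m:ℝ) + (A-1) - j)) / (Nat.factorial (m - i)))) *
        (ξ ^ (((n:ℝ) + i + A) - 1) * Real.exp (-ξ)))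
      (Set.Ioi 0) := by
    apply integrable_finset_sum
    intro i _
    exact (momentIntegrable (by positivity : (0:ℝ) < (n:ℝ) + i + A)).const_mul _
  exact hint.congr_fun (lagEqOn m n A).symm measurableSet_Ioi

lemma factProd (k : ℕ) : ∀ m : ℕ,
    ((Nat.factorial k : ℝ)) * ∏ j ∈ range m, ((k:ℝ) + 1 + j) = ((Nat.factorial (k+m) : ℝ)) := by
  intro m
  induction m with
  | zero => simp
  | succ m ih =>
    rw [prod_range_succ, ← mul_assoc, ih, show k + (m+1) = (k+m) + 1 from rfl,
      Nat.factorial_succ]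
    push_cast
    ring

lemma descProd (m k : ℕ) :
    (∏ j ∈ range m, (((m+k:ℕ):ℝ) - j)) = ((Nat.factorial (m+k) : ℝ)) / (Nat.factorial k : ℝ) := by
  have h1 : (∏ j ∈ range m, (((m+k:ℕ):ℝ) - j)) = ∏ j ∈ range m, ((k:ℝ)+1+j) := by
    rw [← prod_range_reflect (fun j => (k:ℝ)+1+j) m]
    refine prod_congr rfl fun j hj => ?_
    rw [mem_range] at hj
    have h2 : m - 1 - j = m - (1+j) := by omega
    have h3 : 1 + j ≤ m := by omega
    simp only [h2]
    rw [Nat.cast_sub h3]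
    push_cast
    ring
  rw [h1, eq_div_iff (by positivity : ((Nat.factorial k : ℝ)) ≠ 0)]
  rw [show m + k = k + m from Nat.add_comm m k, ← factProd k m]
  ring

lemma summable_u (c A : ℝ) (hA : 0 < A) (i : ℕ) :
    Summable (fun n : ℕ => (c^2)^n * Real.Gamma ((n:ℝ)+i+A) /
      (Real.Gamma ((n:ℝ)+1) * Real.Gamma (A+(n:ℝ)))) := by
  have hv : Summable (fun n : ℕ => ((n:ℝ)+1)^i * (1/2:ℝ)^n) := by
    have h1 : Summable (fun n : ℕ => (n:ℝ)^i * (1/2:ℝ)^n) :=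
      summable_pow_mul_geometric_of_norm_lt_one i (by rw [Real.norm_eq_abs, abs_of_pos (by norm_num : (0:ℝ) < 1/2)]; norm_num)
    have h2 := h1.comp_injective (add_left_injective 1)
    have h3 := h2.mul_left 2
    refine h3.congr fun n => ?_
    show 2 * (((n+1:ℕ):ℝ)^i * (1/2:ℝ)^(n+1)) = ((n:ℝ)+1)^i * (1/2:ℝ)^n
    push_cast
    rw [pow_succ]
    ring
  refine Summable.of_nonneg_of_le (fun n => ?_) (fun n => ?_)
    (hv.mul_left (Real.exp (2*c^2) * (A+i+1)^i))
  · have g1 := Real.Gamma_pos_of_pos (show (0:ℝ) < (n:ℝ)+i+A by positivity)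
    have g2 := Real.Gamma_pos_of_pos (show (0:ℝ) < (n:ℝ)+1 by positivity)
    have g3 := Real.Gamma_pos_of_pos (show (0:ℝ) < A+(n:ℝ) by positivity)
    positivity
  · have hnA : (0:ℝ) < (n:ℝ) + A := by positivity
    have e1 : Real.Gamma ((n:ℝ)+i+A) = Real.Gamma ((n:ℝ)+A) * ∏ k ∈ range i, ((n:ℝ)+A+k) := by
      have hg := gammaProd hnA i
      rw [show (n:ℝ)+i+A = ((n:ℝ)+A)+(i:ℝ) by ring, hg]
    have e2 : Real.Gamma (A+(n:ℝ)) = Real.Gamma ((n:ℝ)+A) := by rw [add_comm]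
    have e3 : Real.Gamma ((n:ℝ)+1) = (Nat.factorial n : ℝ) := Real.Gamma_nat_eq_factorial n
    rw [e1, e2, e3]
    have hΓ : Real.Gamma ((n:ℝ)+A) ≠ 0 := (Real.Gamma_pos_of_pos hnA).ne'
    have hf : ((Nat.factorial n : ℝ)) ≠ 0 := by positivity
    have e4 : (c^2)^n * (Real.Gamma ((n:ℝ)+A) * ∏ k ∈ range i, ((n:ℝ)+A+k)) /
        ((Nat.factorial n : ℝ) * Real.Gamma ((n:ℝ)+A))
        = ((c^2)^n / (Nat.factorial n : ℝ)) * ∏ k ∈ range i, ((n:ℝ)+A+k) := by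
      field_simp
    rw [e4]
    have hprodle : (∏ k ∈ range i, ((n:ℝ)+A+k)) ≤ ((A+i+1)*((n:ℝ)+1))^i := by
      calc (∏ k ∈ range i, ((n:ℝ)+A+k))
          ≤ ∏ _k ∈ range i, ((A+(i:ℝ)+1)*((n:ℝ)+1)) := by
            refine prod_le_prod (fun k _ => by positivity) (fun k hk => ?_)
            rw [mem_range] at hk
            have : (k:ℝ) ≤ (i:ℝ) := by exact_mod_cast Nat.le_of_lt hk
            nlinarith [Nat.cast_nonneg (α := ℝ) n, hA]
        _ = ((A+(i:ℝ)+1)*((n:ℝ)+1))^i := by rw [prod_const, card_range]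
    have hfac : (c^2)^n / (Nat.factorial n : ℝ) ≤ Real.exp (2*c^2) * (1/2:ℝ)^n := by
      have h := Real.pow_div_factorial_le_exp (2*c^2) (show (0:ℝ) ≤ 2*c^2 by positivity) n
      have e5 : (c^2)^n = (2*c^2)^n * (1/2:ℝ)^n := by
        rw [← mul_pow]
        congr 1
        ring
      calc (c^2)^n / (Nat.factorial n : ℝ) = ((2*c^2)^n / (Nat.factorial n : ℝ)) * (1/2:ℝ)^n := by
            rw [e5]; ring
        _ ≤ Real.exp (2*c^2) * (1/2:ℝ)^n :=
            mul_le_mul_of_nonneg_right h (by positivity)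
    calc ((c^2)^n / (Nat.factorial n : ℝ)) * ∏ k ∈ range i, ((n:ℝ)+A+k)
        ≤ (Real.exp (2*c^2) * (1/2:ℝ)^n) * ((A+(i:ℝ)+1)*((n:ℝ)+1))^i := by
          refine mul_le_mul hfac hprodle (prod_nonneg fun k _ => by positivity) (by positivity)
      _ = (Real.exp (2*c^2) * (A+(i:ℝ)+1)^i) * (((n:ℝ)+1)^i * (1/2:ℝ)^n) := by
          rw [mul_pow]
          ring

lemma coeff_eval (m : ℕ) {A : ℝ} (hA : 0 < A) (c : ℝ) :
    (∫ ξ in Set.Ioi (0:ℝ),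
        (∑' n : ℕ, (-c ^ 2) ^ n * Real.Gamma A * ξ ^ n /
            (Real.Gamma ((n : ℝ) + 1) * Real.Gamma (A + (n : ℝ)))) *
          normGenLaguerre m (A - 1) ξ * (ξ ^ (A - 1) * Real.exp (-ξ) / Real.Gamma A))
      = (c^2)^m * Real.sqrt ((Nat.factorial m) / Real.Gamma ((m:ℝ) + A)) * Real.exp (-c^2)
          / (Nat.factorial m) := by
  set N : ℝ := Real.sqrt ((Nat.factorial m) / Real.Gamma ((m:ℝ) + A)) with hN
  have hN0 : 0 ≤ N := Real.sqrt_nonneg _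
  set g : ℕ → ℝ → ℝ := fun n ξ =>
    ((-c^2)^n * N / (Real.Gamma ((n:ℝ)+1) * Real.Gamma (A + (n:ℝ)))) *
      (ξ ^ (n:ℕ) * genLaguerreR m (A-1) ξ * (ξ ^ (A-1) * Real.exp (-ξ))) with hg
  have hΓA : Real.Gamma A ≠ 0 := (Real.Gamma_pos_of_pos hA).ne'
  have hΓn : ∀ n : ℕ, (0:ℝ) < Real.Gamma ((n:ℝ)+1) :=
    fun n => Real.Gamma_pos_of_pos (by positivity)
  have hΓAn : ∀ n : ℕ, (0:ℝ) < Real.Gamma (A + (n:ℝ)) :=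
    fun n => Real.Gamma_pos_of_pos (by positivity)
  have hΓnA : ∀ n : ℕ, (0:ℝ) < Real.Gamma ((n:ℝ) + A) :=
    fun n => Real.Gamma_pos_of_pos (by positivity)
  have hnorm : ∀ ξ : ℝ, normGenLaguerre m (A - 1) ξ = N * genLaguerreR m (A-1) ξ := by
    intro ξ
    rw [normGenLaguerre, show (m:ℝ) + (A-1) + 1 = (m:ℝ) + A by ring]
  have hpt : ∀ ξ : ℝ,
      (∑' n : ℕ, (-c ^ 2) ^ n * Real.Gamma A * ξ ^ n /
            (Real.Gamma ((n : ℝ) + 1) * Real.Gamma (A + (n : ℝ)))) *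
          normGenLaguerre m (A - 1) ξ * (ξ ^ (A - 1) * Real.exp (-ξ) / Real.Gamma A)
        = ∑' n : ℕ, g n ξ := by
    intro ξ
    rw [mul_assoc, ← tsum_mul_right]
    refine tsum_congr fun n => ?_
    simp only [hg, hnorm]
    field_simp
  simp only [hpt]
  have hgint : ∀ n : ℕ, Integrable (g n) (volume.restrict (Set.Ioi 0)) :=
    fun n => (lagIntegrable m n hA).const_mul _
  -- the norm bound
  set K : ℕ → ℝ := fun i => |(-1:ℝ)^i / (Nat.factorial i) *
    ((∏ j ∈ range (m - i), ((m:ℝ) + (A-1) - j)) / (Nat.factorial (m - i)))| with hK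
  set B : ℕ → ℝ := fun n => ((c^2)^n * N / (Real.Gamma ((n:ℝ)+1) * Real.Gamma (A + (n:ℝ)))) *
    ∑ i ∈ range (m+1), K i * Real.Gamma ((n:ℝ) + i + A) with hB
  have habs : ∀ n : ℕ, |(-c^2)^n * N / (Real.Gamma ((n:ℝ)+1) * Real.Gamma (A + (n:ℝ)))|
      = (c^2)^n * N / (Real.Gamma ((n:ℝ)+1) * Real.Gamma (A + (n:ℝ))) := by
    intro n
    rw [abs_div, abs_mul, abs_pow, abs_neg, abs_of_nonneg (sq_nonneg c), abs_of_nonneg hN0,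
      abs_of_pos (mul_pos (hΓn n) (hΓAn n))]
  have hbound : ∀ n : ℕ, (∫ ξ in Set.Ioi (0:ℝ), ‖g n ξ‖) ≤ B n := by
    intro n
    have hφint : IntegrableOn (fun ξ : ℝ =>
        ((c^2)^n * N / (Real.Gamma ((n:ℝ)+1) * Real.Gamma (A + (n:ℝ)))) *
        ∑ i ∈ range (m+1), K i * (ξ ^ (((n:ℝ) + i + A) - 1) * Real.exp (-ξ))) (Set.Ioi 0) := by
      apply Integrable.const_mul
      apply integrable_finset_sum
      intro i _
      exact (momentIntegrable (by positivity : (0:ℝ) < (n:ℝ) + i + A)).const_mul _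
    have hle : ∀ ξ ∈ Set.Ioi (0:ℝ), ‖g n ξ‖ ≤
        ((c^2)^n * N / (Real.Gamma ((n:ℝ)+1) * Real.Gamma (A + (n:ℝ)))) *
        ∑ i ∈ range (m+1), K i * (ξ ^ (((n:ℝ) + i + A) - 1) * Real.exp (-ξ)) := by
      intro ξ hξ
      have hξ' : (0:ℝ) < ξ := hξ
      rw [hg]
      show |((-c^2)^n * N / (Real.Gamma ((n:ℝ)+1) * Real.Gamma (A + (n:ℝ)))) *
        (ξ ^ (n:ℕ) * genLaguerreR m (A-1) ξ * (ξ ^ (A-1) * Real.exp (-ξ)))| ≤ _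
      rw [abs_mul, habs n]
      refine mul_le_mul_of_nonneg_left ?_ (by positivity)
      rw [show (ξ ^ (n:ℕ) * genLaguerreR m (A - 1) ξ * (ξ ^ (A - 1) * Real.exp (-ξ)))
        = ∑ i ∈ range (m+1), ((-1:ℝ)^i / (Nat.factorial i) *
            ((∏ j ∈ range (m - i), ((m:ℝ) + (A-1) - j)) / (Nat.factorial (m - i)))) *
            (ξ ^ (((n:ℝ) + i + A) - 1) * Real.exp (-ξ)) from lagEqOn m n A hξ]
      refine (Finset.abs_sum_le_sum_abs _ _).trans ?_
      refine le_of_eq (sum_congr rfl fun i _ => ?_)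
      rw [abs_mul, abs_of_nonneg
        (show (0:ℝ) ≤ ξ ^ (((n:ℝ)+i+A) - 1) * Real.exp (-ξ) by positivity)]
    calc (∫ ξ in Set.Ioi (0:ℝ), ‖g n ξ‖)
        ≤ ∫ ξ in Set.Ioi (0:ℝ),
          ((c^2)^n * N / (Real.Gamma ((n:ℝ)+1) * Real.Gamma (A + (n:ℝ)))) *
          ∑ i ∈ range (m+1), K i * (ξ ^ (((n:ℝ) + i + A) - 1) * Real.exp (-ξ)) :=
          setIntegral_mono_on ((hgint n).norm) hφint measurableSet_Ioi hle
      _ = B n := by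
          rw [MeasureTheory.integral_const_mul]
          have hfs : (∫ ξ in Set.Ioi (0:ℝ), ∑ i ∈ range (m+1),
              K i * (ξ ^ (((n:ℝ) + i + A) - 1) * Real.exp (-ξ)))
              = ∑ i ∈ range (m+1), ∫ ξ in Set.Ioi (0:ℝ),
                K i * (ξ ^ (((n:ℝ) + i + A) - 1) * Real.exp (-ξ)) :=
            integral_finset_sum _ (fun i _ =>
              (momentIntegrable (by positivity : (0:ℝ) < (n:ℝ) + i + A)).const_mul _)
          rw [hfs, hB]
          congr 1
          refine sum_congr rfl fun i _ => ?_
          rw [MeasureTheory.integral_const_mul,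
            momentInt (by positivity : (0:ℝ) < (n:ℝ) + i + A)]
  have hBsum : Summable B := by
    have hBeq : B = fun n : ℕ => ∑ i ∈ range (m+1), (N * K i) *
        ((c^2)^n * Real.Gamma ((n:ℝ)+i+A) /
          (Real.Gamma ((n:ℝ)+1) * Real.Gamma (A+(n:ℝ)))) := by
      funext n
      simp only [hB]
      rw [mul_sum]
      exact sum_congr rfl fun i _ => by ring
    rw [hBeq]
    exact summable_sum (fun i _ => ((summable_u c A hA i).mul_left _))
  have hsum : Summable (fun n : ℕ => ∫ ξ in Set.Ioi (0:ℝ), ‖g n ξ‖) := by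
    refine Summable.of_nonneg_of_le (fun n => ?_) hbound hBsum
    exact integral_nonneg (fun ξ => norm_nonneg _)
  rw [← MeasureTheory.integral_tsum_of_summable_integral_norm hgint hsum]
  -- evaluate each integral
  have hval : ∀ n : ℕ, (∫ ξ in Set.Ioi (0:ℝ), g n ξ)
      = (-c^2)^n * (-1:ℝ)^m * N * (∏ k ∈ range m, ((n:ℝ) - k)) /
          ((Nat.factorial n : ℝ) * (Nat.factorial m : ℝ)) := by
    intro n
    simp only [hg]
    rw [MeasureTheory.integral_const_mul, lagInt m n hA,
      show Real.Gamma (A + (n:ℝ)) = Real.Gamma ((n:ℝ)+A) from by rw [add_comm],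
      Real.Gamma_nat_eq_factorial]
    have h1 : Real.Gamma ((n:ℝ)+A) ≠ 0 := (hΓnA n).ne'
    have h2 : ((Nat.factorial n : ℝ)) ≠ 0 := by positivity
    have h3 : ((Nat.factorial m : ℝ)) ≠ 0 := by positivity
    field_simp
  rw [tsum_congr hval]
  have hinj : Function.Injective (fun k : ℕ => m + k) := fun a b h => by simpa using h
  have hsupp : Function.support (fun n : ℕ => (-c^2)^n * (-1:ℝ)^m * N *
      (∏ k ∈ range m, ((n:ℝ) - k)) / ((Nat.factorial n : ℝ) * (Nat.factorial m : ℝ)))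
      ⊆ Set.range (fun k : ℕ => m + k) := by
    intro n hn
    rw [Function.mem_support] at hn
    by_contra hnr
    have hnm : n < m := by
      rcases Nat.lt_or_ge n m with h | h
      · exact h
      · exact absurd ⟨n - m, by simp; omega⟩ hnr
    apply hn
    rw [prod_eq_zero (mem_range.mpr hnm) (by simp : ((n:ℝ) - (n:ℕ)) = 0)]
    simp
  rw [← hinj.tsum_eq hsupp]
  have hterm : ∀ k : ℕ, (-c^2)^(m+k) * (-1:ℝ)^m * N *
      (∏ j ∈ range m, (((m+k:ℕ):ℝ) - j)) / ((Nat.factorial (m+k) : ℝ) * (Nat.factorial m : ℝ))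
      = ((c^2)^m * N / (Nat.factorial m : ℝ)) * ((-c^2)^k / (Nat.factorial k : ℝ)) := by
    intro k
    rw [descProd m k]
    have h1 : ((Nat.factorial (m+k) : ℝ)) ≠ 0 := by positivity
    have h2 : ((Nat.factorial k : ℝ)) ≠ 0 := by positivity
    have h3 : ((Nat.factorial m : ℝ)) ≠ 0 := by positivity
    have h5 : (-c^2:ℝ)^m * (-1:ℝ)^m = (c^2)^m := by
      rw [← mul_pow]
      congr 1
      ring
    have h6 : (-c^2:ℝ)^(m+k) * (-1:ℝ)^m = (c^2)^m * (-c^2)^k := by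
      rw [pow_add, show (-c^2:ℝ)^m * (-c^2:ℝ)^k * (-1:ℝ)^m
        = ((-c^2:ℝ)^m * (-1:ℝ)^m) * (-c^2:ℝ)^k from by ring, h5]
    rw [h6]
    field_simp
  have hshift : (∑' k : ℕ, (-c^2)^(m+k) * (-1:ℝ)^m * N *
      (∏ j ∈ range m, (((m+k:ℕ):ℝ) - j)) / ((Nat.factorial (m+k) : ℝ) * (Nat.factorial m : ℝ)))
      = ((c^2)^m * N / (Nat.factorial m : ℝ)) * ∑' k : ℕ, ((-c^2)^k / (Nat.factorial k : ℝ)) := by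
    rw [← tsum_mul_left]
    exact tsum_congr hterm
  have hexp : (∑' k : ℕ, ((-c^2:ℝ)^k / (Nat.factorial k : ℝ))) = Real.exp (-c^2) := by
    rw [congrFun Real.exp_eq_exp_ℝ (-c^2), congrFun (NormedSpace.exp_eq_tsum_div) (-c^2:ℝ)]
  show (∑' k : ℕ, (-c^2)^(m+k) * (-1:ℝ)^m * N *
      (∏ j ∈ range m, (((m+k:ℕ):ℝ) - j)) / ((Nat.factorial (m+k) : ℝ) * (Nat.factorial m : ℝ)))
      = (c^2)^m * N * Real.exp (-c^2) / (Nat.factorial m : ℝ)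
  rw [hshift, hexp]
  ring


/-- The Laguerre coefficients `γ_m = ⟨f̄, ℓ_m^α⟩_{p_Ξ}` of the spherical average
`f̄(ξ) = ∑_n (-c²)^n Γ(d/2) ξ^n/(Γ(n+1)Γ(d/2+n))`, with `α = d/2-1` and
`p_Ξ(ξ) = ξ^{d/2-1}e^{-ξ}/Γ(d/2)`, satisfy `|γ_m| = √(1/(m!Γ(m+d/2))) c^{2m} e^{-c²}`
(in particular `|γ_m|` is bounded by that quantity), where `c = ‖x-y‖/(√2 σ)`. -/
theorem abs_laguerre_coeff_spherical_average (d : ℕ) (hd : 2 ≤ d)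
    (x y : EuclideanSpace ℝ (Fin d)) (σ : ℝ) (hσ : 0 < σ) (m : ℕ)
    (c : ℝ) (hc : c = ‖x - y‖ / (Real.sqrt 2 * σ)) :
    |∫ ξ in Set.Ioi (0 : ℝ),
        (∑' n : ℕ, (-c ^ 2) ^ n * Real.Gamma ((d : ℝ) / 2) * ξ ^ n /
            (Real.Gamma ((n : ℝ) + 1) * Real.Gamma ((d : ℝ) / 2 + (n : ℝ)))) *
          normGenLaguerre m ((d : ℝ) / 2 - 1) ξ *
          (ξ ^ ((d : ℝ) / 2 - 1) * Real.exp (-ξ) / Real.Gamma ((d : ℝ) / 2))| =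
      Real.sqrt (1 / ((Nat.factorial m) * Real.Gamma ((m : ℝ) + (d : ℝ) / 2))) *
        c ^ (2 * m) * Real.exp (-c ^ 2) := by
  have hd2 : (0:ℝ) < (d:ℝ)/2 := by
    have : (2:ℝ) ≤ (d:ℝ) := by exact_mod_cast hd
    linarith
  rw [coeff_eval m hd2 c]
  have hΓ : 0 < Real.Gamma ((m:ℝ) + (d:ℝ)/2) := Real.Gamma_pos_of_pos (by positivity)
  have hm0 : (0:ℝ) < (Nat.factorial m : ℝ) := by positivity
  rw [abs_of_nonneg (by positivity)]
  have h1 : (1:ℝ)/((Nat.factorial m : ℝ) * Real.Gamma ((m:ℝ) + (d:ℝ)/2))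
      = ((Nat.factorial m : ℝ)/Real.Gamma ((m:ℝ) + (d:ℝ)/2)) / ((Nat.factorial m : ℝ))^2 := by
    field_simp
  rw [h1, Real.sqrt_div (by positivity) _,
    Real.sqrt_div (show (0:ℝ) ≤ (Nat.factorial m : ℝ)/Real.Gamma ((m:ℝ)+(d:ℝ)/2) by positivity)
      (((Nat.factorial m : ℝ))^2),
    Real.sqrt_sq hm0.le, Real.sqrt_div hm0.le (Real.Gamma ((m:ℝ)+(d:ℝ)/2)), pow_mul]
  ring
end

section
/- Let d ≥ 2, k even, β ≥ 0, and let P_k be the Gegenbauer polynomial of degree k normalized with P_k(1)=1. Define λ_k := (Γ(d/2)/(√π Γ((d-1)/2))) ∫_{-1}^1 cos(βt) P_k(t) (1-t²)^{(d-3)/2} dt. Then |λ_k| ≤ (β/2)^k · Γ((d-1)/2)/Γ(k+(d-1)/2). -/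
open Real intervalIntegral

/-- The Gegenbauer polynomial of degree `k` for dimension `d`, via the Rodrigues formula. -/
noncomputable def gegenbauerRodrigues (d k : ℕ) (t : ℝ) : ℝ :=
  (-(1 : ℝ) / 2) ^ k *
    (Real.Gamma (((d : ℝ) - 1) / 2) / Real.Gamma ((k : ℝ) + ((d : ℝ) - 1) / 2)) *
    (1 - t ^ 2) ^ ((3 - (d : ℝ)) / 2) *
    iteratedDeriv k (fun s : ℝ => (1 - s ^ 2) ^ ((k : ℝ) + ((d : ℝ) - 3) / 2)) t

open MeasureTheory Set Polynomial

lemma contOn_rpow_ne {c : ℝ} {v : ℝ → ℝ} (hv : Continuous v) {s : Set ℝ}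
    (hs : ∀ t ∈ s, v t ≠ 0) : ContinuousOn (fun t => v t ^ c) s := fun t ht =>
  ((Real.continuousAt_rpow_const (v t) c (Or.inl (hs t ht))).comp hv.continuousAt).continuousWithinAt


lemma IntervalIntegrable.congr_on {f g : ℝ → ℝ} {a b : ℝ} (h : IntervalIntegrable f volume a b)
    (heq : ∀ t ∈ Set.uIoc a b, f t = g t) : IntervalIntegrable g volume a b := by
  rw [intervalIntegrable_iff] at h ⊢
  exact h.congr_fun heq measurableSet_uIoc

lemma integrable_weight {c : ℝ} (hc : -1 < c) {u : ℝ → ℝ} (hu : Continuous u) :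
    IntervalIntegrable (fun t => u t * (1 - t ^ 2) ^ c) volume (-1) 1 := by
  have key : IntervalIntegrable (fun t => (1 - t) ^ c * ((1 + t) ^ c * u t)) volume (-1) 1 := by
    have h01 : IntervalIntegrable (fun t => (1 - t) ^ c * ((1 + t) ^ c * u t)) volume 0 1 := by
      have hbase : IntervalIntegrable (fun t : ℝ => (1 - t) ^ c) volume 0 1 := by
        have := (intervalIntegrable_rpow' (a := 0) (b := 1) hc).comp_sub_left 1
        simpa using this.symm
      refine hbase.mul_continuousOn ?_
      refine (contOn_rpow_ne (by continuity) ?_).mul hu.continuousOn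
      intro t ht
      rw [Set.uIcc_of_le (by norm_num : (0:ℝ) ≤ 1)] at ht
      nlinarith [ht.1, ht.2]
    have hm0 : IntervalIntegrable (fun t => (1 - t) ^ c * ((1 + t) ^ c * u t)) volume (-1) 0 := by
      have hbase : IntervalIntegrable (fun t : ℝ => (1 + t) ^ c) volume (-1) 0 := by
        have := (intervalIntegrable_rpow' (a := 0) (b := 1) hc).comp_add_right 1
        simpa [add_comm] using this
      have := hbase.mul_continuousOn (g := fun t => (1 - t) ^ c * u t) ?_
      · refine this.congr_on ?_
        intro t _; ring
      · refine (contOn_rpow_ne (by continuity) ?_).mul hu.continuousOn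
        intro t ht
        rw [Set.uIcc_of_le (by norm_num : (-1:ℝ) ≤ 0)] at ht
        nlinarith [ht.1, ht.2]
    exact hm0.trans h01
  refine key.congr_on ?_
  intro t ht
  rw [Set.uIoc_of_le (by norm_num : (-1:ℝ) ≤ 1)] at ht
  rw [show (1 : ℝ) - t ^ 2 = (1 - t) * (1 + t) by ring,
    Real.mul_rpow (by linarith [ht.2]) (by linarith [ht.1])]
  ring

lemma real_betaIntegral {a b : ℝ} (ha : 0 < a) (hb : 0 < b) :
    ∫ x in (0:ℝ)..1, x ^ (a - 1) * (1 - x) ^ (b - 1) =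
      Real.Gamma a * Real.Gamma b / Real.Gamma (a + b) := by
  have h := Complex.Gamma_mul_Gamma_eq_betaIntegral (s := (a:ℂ)) (t := (b:ℂ))
    (by simpa using ha) (by simpa using hb)
  have hbeta : Complex.betaIntegral (a:ℂ) (b:ℂ) =
      ((∫ x in (0:ℝ)..1, x ^ (a - 1) * (1 - x) ^ (b - 1) : ℝ) : ℂ) := by
    rw [Complex.betaIntegral, ← intervalIntegral.integral_ofReal]
    refine intervalIntegral.integral_congr fun x hx => ?_
    rw [Set.uIcc_of_le (by norm_num : (0:ℝ) ≤ 1)] at hx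
    rw [Complex.ofReal_mul, Complex.ofReal_cpow hx.1,
      Complex.ofReal_cpow (by linarith [hx.2] : (0:ℝ) ≤ 1 - x)]
    push_cast
    ring
  rw [hbeta, ← Complex.ofReal_add, Complex.Gamma_ofReal, Complex.Gamma_ofReal,
    Complex.Gamma_ofReal, ← Complex.ofReal_mul, ← Complex.ofReal_mul] at h
  have h' : Real.Gamma a * Real.Gamma b =
      Real.Gamma (a + b) * ∫ x in (0:ℝ)..1, x ^ (a - 1) * (1 - x) ^ (b - 1) := by
    exact_mod_cast h
  have hab : Real.Gamma (a + b) ≠ 0 := (Real.Gamma_pos_of_pos (by linarith)).ne'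
  field_simp [hab]
  linarith [h']

lemma integral_one_sub_sq_rpow {p : ℝ} (hp : -1 < p) :
    ∫ t in (-1:ℝ)..1, (1 - t ^ 2) ^ p =
      Real.sqrt π * Real.Gamma (p + 1) / Real.Gamma (p + 3 / 2) := by
  have hsub := intervalIntegral.integral_comp_mul_add (a := (0:ℝ)) (b := 1)
    (f := fun t => (1 - t ^ 2) ^ p) (c := 2) two_ne_zero (-1)
  norm_num at hsub
  -- hsub : ∫ x in 0..1, (1 - (2*x + -1)^2)^p = 2⁻¹ • ∫ t in -1..1, (1-t^2)^p  (roughly)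
  have hcongr : ∫ x in (0:ℝ)..1, (1 - (2 * x + -1) ^ 2) ^ p
      = ∫ x in (0:ℝ)..1, (4:ℝ) ^ p * (x ^ ((p+1) - 1) * (1 - x) ^ ((p+1) - 1)) := by
    refine intervalIntegral.integral_congr fun x hx => ?_
    rw [Set.uIcc_of_le (by norm_num : (0:ℝ) ≤ 1)] at hx
    rw [show (1:ℝ) - (2 * x + -1) ^ 2 = 4 * (x * (1 - x)) by ring,
      Real.mul_rpow (by norm_num) (mul_nonneg hx.1 (by linarith [hx.2])),
      Real.mul_rpow hx.1 (by linarith [hx.2])]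
    norm_num
  have hbeta := real_betaIntegral (a := p + 1) (b := p + 1) (by linarith) (by linarith)
  have hval : ∫ t in (-1:ℝ)..1, (1 - t ^ 2) ^ p
      = 2 * ((4:ℝ) ^ p * (Real.Gamma (p+1) * Real.Gamma (p+1) / Real.Gamma (p + 1 + (p + 1)))) := by
    have hflip : ∫ t in (-1:ℝ)..1, (1 - t ^ 2) ^ p
        = 2 * ∫ x in (0:ℝ)..1, (1 - (2 * x + -1) ^ 2) ^ p := by
      rw [hsub]; ring
    rw [hflip, hcongr, intervalIntegral.integral_const_mul, hbeta]
  rw [hval]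
  have hdup := Real.Gamma_mul_Gamma_add_half (p + 1)
  have h4 : (4:ℝ) ^ p = (2:ℝ) ^ (2 * p) := by
    rw [show (4:ℝ) = (2:ℝ) ^ (2:ℝ) by
      rw [show (2:ℝ) = ((2:ℕ):ℝ) by norm_num, Real.rpow_natCast]; norm_num,
      ← Real.rpow_mul (by norm_num)]
  have harg1 : p + 1 + 1 / 2 = p + 3 / 2 := by ring
  have harg2 : 2 * (p + 1) = p + 1 + (p + 1) := by ring
  rw [harg1, harg2] at hdup
  rw [show (1:ℝ) - (p + 1 + (p + 1)) = 1 - 2 * (p + 1) by ring] at hdup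
  have hpos1 : 0 < Real.Gamma (p + 1) := Real.Gamma_pos_of_pos (by linarith)
  have hpos2 : 0 < Real.Gamma (p + 3 / 2) := Real.Gamma_pos_of_pos (by linarith)
  have hpos3 : 0 < Real.Gamma (p + 1 + (p + 1)) := Real.Gamma_pos_of_pos (by linarith)
  have hkey : 2 * (4:ℝ) ^ p * (2:ℝ) ^ (1 - 2 * (p + 1)) = 1 := by
    have h1 : 2 * (4:ℝ) ^ p * (2:ℝ) ^ (1 - 2 * (p + 1))
        = (2:ℝ) ^ (1:ℝ) * (2:ℝ) ^ (2 * p) * (2:ℝ) ^ (1 - 2 * (p + 1)) := by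
      rw [Real.rpow_one, h4]
    rw [h1, ← Real.rpow_add (by norm_num : (0:ℝ) < 2),
      ← Real.rpow_add (by norm_num : (0:ℝ) < 2),
      show (1:ℝ) + 2 * p + (1 - 2 * (p + 1)) = 0 by ring, Real.rpow_zero]
  have hlhs : 2 * ((4:ℝ) ^ p * (Real.Gamma (p+1) * Real.Gamma (p+1) / Real.Gamma (p + 1 + (p + 1))))
      = 2 * ((4:ℝ) ^ p * (Real.Gamma (p+1) * Real.Gamma (p+1))) / Real.Gamma (p + 1 + (p + 1)) := by
    ring
  rw [hlhs, div_eq_div_iff hpos3.ne' hpos2.ne']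
  calc 2 * ((4:ℝ) ^ p * (Real.Gamma (p+1) * Real.Gamma (p+1))) * Real.Gamma (p + 3/2)
      = 2 * (4:ℝ) ^ p * Real.Gamma (p+1) * (Real.Gamma (p+1) * Real.Gamma (p + 3/2)) := by ring
    _ = 2 * (4:ℝ) ^ p * Real.Gamma (p+1) *
        (Real.Gamma (p + 1 + (p + 1)) * (2:ℝ) ^ (1 - 2*(p+1)) * Real.sqrt π) := by rw [hdup]
    _ = (2 * (4:ℝ) ^ p * (2:ℝ) ^ (1 - 2*(p+1))) *
        (Real.Gamma (p+1) * Real.Gamma (p + 1 + (p + 1)) * Real.sqrt π) := by ring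
    _ = Real.sqrt π * Real.Gamma (p + 1) * Real.Gamma (p + 1 + (p + 1)) := by rw [hkey]; ring

noncomputable def rodP (c : ℝ) : ℕ → Polynomial ℝ
  | 0 => 1
  | (i + 1) => (rodP c i).derivative * (1 - Polynomial.X ^ 2)
      - Polynomial.C (2 * (c - i)) * Polynomial.X * rodP c i

lemma hasDerivAt_rod {c : ℝ} (i : ℕ) {t : ℝ} (ht : t ∈ Set.Ioo (-1:ℝ) 1) :
    HasDerivAt (fun s => (rodP c i).eval s * (1 - s ^ 2) ^ (c - i))
      ((rodP c (i + 1)).eval t * (1 - t ^ 2) ^ (c - (i + 1 : ℕ))) t := by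
  have hx : (0:ℝ) < 1 - t ^ 2 := by nlinarith [ht.1, ht.2]
  have hinner : HasDerivAt (fun s : ℝ => 1 - s ^ 2) (-(2 * t)) t := by
    simpa using (hasDerivAt_pow 2 t).const_sub 1
  have hrpow : HasDerivAt (fun s : ℝ => (1 - s ^ 2) ^ (c - i))
      (-(2 * t) * ((c - i) * (1 - t ^ 2) ^ (c - i - 1))) t := by
    have houter := Real.hasDerivAt_rpow_const (x := 1 - t ^ 2) (p := c - i) (Or.inl hx.ne')
    exact (HasDerivAt.comp t houter hinner).congr_deriv
      (show _ = -(2 * t) * ((c - i) * (1 - t ^ 2) ^ (c - i - 1)) by ring)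
  have hmul := ((rodP c i).hasDerivAt t).mul hrpow
  refine hmul.congr_deriv ?_
  have hsplit : (1 - t ^ 2) ^ (c - i) = (1 - t ^ 2) ^ (c - i - 1) * (1 - t ^ 2) := by
    rw [← Real.rpow_add_one hx.ne']
    ring_nf
  have hcast : c - ((i : ℝ) + 1) = c - i - 1 := by ring
  rw [show ((i + 1 : ℕ) : ℝ) = (i : ℝ) + 1 by push_cast; ring, hcast, hsplit]
  simp only [rodP, Polynomial.eval_sub, Polynomial.eval_mul, Polynomial.eval_one,
    Polynomial.eval_pow, Polynomial.eval_X, Polynomial.eval_C, Polynomial.eval_sub,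
    Polynomial.eval_one]
  ring

lemma iteratedDeriv_one_sub_sq {c : ℝ} (i : ℕ) {t : ℝ} (ht : t ∈ Set.Ioo (-1:ℝ) 1) :
    iteratedDeriv i (fun s : ℝ => (1 - s ^ 2) ^ c) t
      = (rodP c i).eval t * (1 - t ^ 2) ^ (c - i) := by
  induction i generalizing t with
  | zero => simp [rodP]
  | succ n ih =>
    rw [iteratedDeriv_succ]
    have hev : iteratedDeriv n (fun s : ℝ => (1 - s ^ 2) ^ c)
        =ᶠ[nhds t] fun s => (rodP c n).eval s * (1 - s ^ 2) ^ (c - n) := by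
      filter_upwards [isOpen_Ioo.mem_nhds ht] with s hs
      exact ih hs
    rw [hev.deriv_eq]
    exact (hasDerivAt_rod n ht).deriv

noncomputable def fcos (β : ℝ) (j : ℕ) (t : ℝ) : ℝ := β ^ j * Real.cos (β * t + j * (π / 2))

lemma hasDerivAt_fcos (β : ℝ) (j : ℕ) (t : ℝ) :
    HasDerivAt (fcos β j) (fcos β (j + 1) t) t := by
  have h1 : HasDerivAt (fun s : ℝ => β * s + j * (π / 2)) β t := by
    simpa using ((hasDerivAt_id t).const_mul β).add_const ((j : ℝ) * (π / 2))
  have h2 := (Real.hasDerivAt_cos (β * t + j * (π / 2))).comp t h1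
  have h3 := h2.const_mul (β ^ j)
  refine h3.congr_deriv ?_
  rw [fcos, show ((j + 1 : ℕ) : ℝ) = (j : ℝ) + 1 by push_cast; ring,
    show β * t + ((j : ℝ) + 1) * (π / 2) = β * t + j * (π/2) + π/2 by ring,
    Real.cos_add_pi_div_two]
  ring

lemma abs_fcos_le (β : ℝ) (hβ : 0 ≤ β) (j : ℕ) (t : ℝ) : |fcos β j t| ≤ β ^ j := by
  rw [fcos, abs_mul, abs_pow, abs_of_nonneg hβ]
  calc β ^ j * |Real.cos (β * t + j * (π/2))| ≤ β ^ j * 1 :=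
        mul_le_mul_of_nonneg_left (Real.abs_cos_le_one _) (pow_nonneg hβ j)
    _ = β ^ j := mul_one _

lemma continuous_fcos (β : ℝ) (j : ℕ) : Continuous (fcos β j) := by
  unfold fcos; continuity

-- single integration by parts step
lemma ibp_step {β c : ℝ} {i j : ℕ} (hpos : 0 < c - i) (hlow : -1 < c - (i + 1 : ℕ)) :
    ∫ t in (-1:ℝ)..1, fcos β j t * ((rodP c (i+1)).eval t * (1 - t ^ 2) ^ (c - (i+1 : ℕ)))
      = - ∫ t in (-1:ℝ)..1, fcos β (j+1) t * ((rodP c i).eval t * (1 - t ^ 2) ^ (c - i)) := by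
  set H : ℝ → ℝ := fun t => (rodP c i).eval t * (1 - t ^ 2) ^ (c - i) with hH
  set G : ℝ → ℝ := fun t => fcos β j t * H t with hG
  have hHcont : Continuous H := by
    refine (rodP c i).continuous_aeval.mul ?_
    exact (Real.continuous_rpow_const hpos.le).comp (by continuity)
  have hI1 : IntervalIntegrable
      (fun t => fcos β (j+1) t * ((rodP c i).eval t * (1 - t ^ 2) ^ (c - i)))
      volume (-1) 1 := by
    have := integrable_weight (u := fun t => fcos β (j+1) t * (rodP c i).eval t)
      (by linarith : (-1:ℝ) < c - i)
      ((continuous_fcos β (j+1)).mul (rodP c i).continuous_aeval)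
    simpa [mul_assoc] using this
  have hI2 : IntervalIntegrable
      (fun t => fcos β j t * ((rodP c (i+1)).eval t * (1 - t ^ 2) ^ (c - (i+1 : ℕ))))
      volume (-1) 1 := by
    have := integrable_weight (u := fun t => fcos β j t * (rodP c (i+1)).eval t) hlow
      ((continuous_fcos β j).mul (rodP c (i+1)).continuous_aeval)
    simpa [mul_assoc] using this
  have hident : ∫ t in (-1:ℝ)..1,
      (fcos β (j+1) t * H t + fcos β j t * ((rodP c (i+1)).eval t * (1 - t ^ 2) ^ (c - (i+1 : ℕ))))
      = G 1 - G (-1) := by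
    apply intervalIntegral.integral_eq_sub_of_hasDeriv_right_of_le (by norm_num)
    · exact ((continuous_fcos β j).mul hHcont).continuousOn
    · intro x hx
      exact (((hasDerivAt_fcos β j x).mul (hasDerivAt_rod i hx))).hasDerivWithinAt
    · exact hI1.add hI2
  have hGz : G 1 - G (-1) = 0 := by
    have h1 : H 1 = 0 := by
      simp only [hH]
      rw [show (1:ℝ) - 1 ^ 2 = 0 by norm_num, Real.zero_rpow hpos.ne']
      ring
    have h2 : H (-1) = 0 := by
      simp only [hH]
      rw [show (1:ℝ) - (-1:ℝ) ^ 2 = 0 by norm_num, Real.zero_rpow hpos.ne']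
      ring
    simp [hG, h1, h2]
  rw [intervalIntegral.integral_add hI1 hI2, hGz] at hident
  linarith [hident]

-- iterated chain
lemma ibp_chain {β c : ℝ} : ∀ (n j : ℕ), (∀ i : ℕ, i < n + j → 0 < c - i) →
    (-1 < c - (n + j : ℕ)) →
    ∫ t in (-1:ℝ)..1, fcos β j t * ((rodP c n).eval t * (1 - t ^ 2) ^ (c - n))
      = (-1) ^ n * ∫ t in (-1:ℝ)..1, fcos β (n + j) t * (1 - t ^ 2) ^ c := by
  intro n
  induction n with
  | zero =>
    intro j _ _
    simp [rodP]
  | succ n ih =>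
    intro j hpos hlow
    have hstep := ibp_step (β := β) (c := c) (i := n) (j := j)
      (hpos n (by omega)) ?_
    · rw [hstep]
      have hih := ih (j + 1) (fun i hi => hpos i (by omega)) ?_
      · rw [hih, show n + (j + 1) = n + 1 + j by omega]
        ring
      · rw [show n + (j + 1) = n + 1 + j by omega]; exact hlow
    · have hle : ((n + 1 : ℕ) : ℝ) ≤ ((n + 1 + j : ℕ) : ℝ) := by
        exact_mod_cast Nat.le_add_right (n + 1) j
      have := hlow
      push_cast at this hle ⊢
      linarith


/-- Bound on the Gegenbauer coefficients of `t ↦ cos(βt)`: for `d ≥ 2`, even `k`, `β ≥ 0`,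
`|λ_k| ≤ (β/2)^k Γ((d-1)/2)/Γ(k+(d-1)/2)`. -/
theorem abs_gegenbauer_coeff_cos_le (d k : ℕ) (hd : 2 ≤ d) (hk : Even k) (β : ℝ) (hβ : 0 ≤ β) :
    |Real.Gamma ((d : ℝ) / 2) / (Real.sqrt π * Real.Gamma (((d : ℝ) - 1) / 2)) *
        ∫ t in (-1:ℝ)..1,
          Real.cos (β * t) * gegenbauerRodrigues d k t * (1 - t ^ 2) ^ (((d : ℝ) - 3) / 2)| ≤
      (β / 2) ^ k * (Real.Gamma (((d : ℝ) - 1) / 2) / Real.Gamma ((k : ℝ) + ((d : ℝ) - 1) / 2)) := by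
  have hd2 : (2:ℝ) ≤ (d:ℝ) := by exact_mod_cast hd
  set c : ℝ := (k : ℝ) + ((d : ℝ) - 3) / 2 with hc
  set γ : ℝ := Real.Gamma (((d : ℝ) - 1) / 2) / Real.Gamma ((k : ℝ) + ((d : ℝ) - 1) / 2) with hγ
  set Cst : ℝ := Real.Gamma ((d : ℝ) / 2) / (Real.sqrt π * Real.Gamma (((d : ℝ) - 1) / 2))
    with hCst
  have hG1 : 0 < Real.Gamma (((d : ℝ) - 1) / 2) := Real.Gamma_pos_of_pos (by linarith)
  have hG2 : 0 < Real.Gamma ((d : ℝ) / 2) := Real.Gamma_pos_of_pos (by linarith)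
  have hG3 : 0 < Real.Gamma ((k : ℝ) + ((d : ℝ) - 1) / 2) := by
    apply Real.Gamma_pos_of_pos
    have : (0:ℝ) ≤ (k:ℝ) := Nat.cast_nonneg k
    linarith
  have hγpos : 0 < γ := div_pos hG1 hG3
  have hCpos : 0 < Cst := div_pos hG2 (mul_pos (Real.sqrt_pos.mpr Real.pi_pos) hG1)
  have hck : c - (k : ℕ) = ((d:ℝ) - 3) / 2 := by rw [hc]; push_cast; ring
  have hclow : -1 < ((d:ℝ) - 3) / 2 := by linarith
  -- Step 1: rewrite the integral
  have hstep1 : ∫ t in (-1:ℝ)..1,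
        Real.cos (β * t) * gegenbauerRodrigues d k t * (1 - t ^ 2) ^ (((d : ℝ) - 3) / 2)
      = ((-(1:ℝ)/2) ^ k * γ) *
        ∫ t in (-1:ℝ)..1, fcos β 0 t * ((rodP c k).eval t * (1 - t ^ 2) ^ (c - (k:ℕ))) := by
    rw [← intervalIntegral.integral_const_mul]
    apply intervalIntegral.integral_congr_ae
    have h1 : ∀ᵐ x : ℝ, x ≠ 1 := by
      refine ae_iff.mpr ?_
      simpa using volume_singleton (a := (1:ℝ))
    filter_upwards [h1] with t ht1 htIoc
    rw [Set.uIoc_of_le (by norm_num : (-1:ℝ) ≤ 1)] at htIoc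
    have htIoo : t ∈ Set.Ioo (-1:ℝ) 1 := ⟨htIoc.1, lt_of_le_of_ne htIoc.2 ht1⟩
    have hx : (0:ℝ) < 1 - t ^ 2 := by nlinarith [htIoo.1, htIoo.2]
    rw [gegenbauerRodrigues, iteratedDeriv_one_sub_sq k htIoo]
    have hcancel : (1 - t ^ 2) ^ ((3 - (d:ℝ)) / 2) * (1 - t ^ 2) ^ (((d:ℝ) - 3) / 2) = 1 := by
      rw [← Real.rpow_add hx, show (3 - (d:ℝ)) / 2 + ((d:ℝ) - 3)/2 = 0 by ring, Real.rpow_zero]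
    calc Real.cos (β * t) *
          ((-(1:ℝ)/2) ^ k * γ * (1 - t ^ 2) ^ ((3 - (d:ℝ)) / 2) *
            ((rodP c k).eval t * (1 - t ^ 2) ^ (c - (k:ℕ)))) *
          (1 - t ^ 2) ^ (((d:ℝ) - 3) / 2)
        = ((-(1:ℝ)/2) ^ k * γ) * (Real.cos (β * t) * ((rodP c k).eval t * (1 - t ^ 2) ^ (c - (k:ℕ)))) *
          ((1 - t ^ 2) ^ ((3 - (d:ℝ)) / 2) * (1 - t ^ 2) ^ (((d:ℝ) - 3) / 2)) := by ring
      _ = ((-(1:ℝ)/2) ^ k * γ) * (fcos β 0 t * ((rodP c k).eval t * (1 - t ^ 2) ^ (c - (k:ℕ)))) := by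
          rw [hcancel, fcos]; push_cast; simp
  -- Step 2: the IBP chain
  have hstep2 : ∫ t in (-1:ℝ)..1, fcos β 0 t * ((rodP c k).eval t * (1 - t ^ 2) ^ (c - (k:ℕ)))
      = (-1) ^ k * ∫ t in (-1:ℝ)..1, fcos β k t * (1 - t ^ 2) ^ c := by
    have := ibp_chain (β := β) (c := c) k 0 ?_ ?_
    · simpa using this
    · intro i hi
      have hik : (i:ℝ) + 1 ≤ (k:ℝ) := by exact_mod_cast Nat.succ_le_of_lt (by omega)
      rw [hc]; linarith
    · rw [show k + 0 = k from rfl, hck]; exact hclow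
  -- Step 3: the bound on the last integral
  have hccast : c - (k:ℕ) = c - (k:ℝ) := rfl
  have hcge : ((d:ℝ) - 3)/2 ≤ c := by
    rw [hc]; have : (0:ℝ) ≤ (k:ℝ) := Nat.cast_nonneg k; linarith
  have hclow' : -1 < c := lt_of_lt_of_le hclow hcge
  have hstep3 : |∫ t in (-1:ℝ)..1, fcos β k t * (1 - t ^ 2) ^ c|
      ≤ β ^ k * (Real.sqrt π * Real.Gamma (((d:ℝ) - 3)/2 + 1) /
          Real.Gamma (((d:ℝ) - 3)/2 + 3/2)) := by
    have hint : IntervalIntegrable (fun t => fcos β k t * (1 - t ^ 2) ^ c) volume (-1) 1 :=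
      integrable_weight hclow' (continuous_fcos β k)
    have hintD : IntervalIntegrable (fun t => β ^ k * (1 - t ^ 2) ^ (((d:ℝ) - 3)/2))
        volume (-1) 1 := integrable_weight hclow continuous_const
    have habs : |∫ t in (-1:ℝ)..1, fcos β k t * (1 - t ^ 2) ^ c|
        ≤ ∫ t in (-1:ℝ)..1, |fcos β k t * (1 - t ^ 2) ^ c| :=
      intervalIntegral.abs_integral_le_integral_abs (by norm_num)
    have hmono : ∫ t in (-1:ℝ)..1, |fcos β k t * (1 - t ^ 2) ^ c|
        ≤ ∫ t in (-1:ℝ)..1, β ^ k * (1 - t ^ 2) ^ (((d:ℝ) - 3)/2) := by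
      apply intervalIntegral.integral_mono_on (by norm_num)
        (by simpa only [Real.norm_eq_abs] using hint.norm) hintD
      intro t htIcc
      have ht2 : (0:ℝ) ≤ 1 - t ^ 2 := by nlinarith [htIcc.1, htIcc.2]
      rw [abs_mul, abs_of_nonneg (Real.rpow_nonneg ht2 c)]
      have h1 : |fcos β k t| * (1 - t ^ 2) ^ c ≤ β ^ k * (1 - t ^ 2) ^ c :=
        mul_le_mul_of_nonneg_right (abs_fcos_le β hβ k t) (Real.rpow_nonneg ht2 c)
      refine le_trans h1 (mul_le_mul_of_nonneg_left ?_ (pow_nonneg hβ k))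
      rcases Nat.eq_zero_or_pos k with hk0 | hk0
      · have : c = ((d:ℝ) - 3)/2 := by rw [hc, hk0]; push_cast; ring
        rw [this]
      · rcases eq_or_lt_of_le ht2 with he | hlt
        · have hcpos : 0 < c := by
            rw [hc]
            have : (1:ℝ) ≤ (k:ℝ) := by exact_mod_cast hk0
            linarith
          rw [← he, Real.zero_rpow hcpos.ne']
          exact Real.rpow_nonneg le_rfl _
        · exact Real.rpow_le_rpow_of_exponent_ge hlt (by nlinarith [htIcc.1, htIcc.2]) hcge
    calc |∫ t in (-1:ℝ)..1, fcos β k t * (1 - t ^ 2) ^ c|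
        ≤ ∫ t in (-1:ℝ)..1, β ^ k * (1 - t ^ 2) ^ (((d:ℝ) - 3)/2) := le_trans habs hmono
      _ = β ^ k * ∫ t in (-1:ℝ)..1, (1 - t ^ 2) ^ (((d:ℝ) - 3)/2) :=
          intervalIntegral.integral_const_mul _ _
      _ = β ^ k * (Real.sqrt π * Real.Gamma (((d:ℝ) - 3)/2 + 1) /
          Real.Gamma (((d:ℝ) - 3)/2 + 3/2)) := by rw [integral_one_sub_sq_rpow hclow]
  -- Step 4: assemble
  rw [hstep1, hstep2]
  rw [show Cst * (((-(1:ℝ)/2) ^ k * γ) * ((-1) ^ k * ∫ t in (-1:ℝ)..1,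
      fcos β k t * (1 - t ^ 2) ^ c))
    = (Cst * γ * ((-(1:ℝ)/2) ^ k * (-1) ^ k)) * ∫ t in (-1:ℝ)..1,
      fcos β k t * (1 - t ^ 2) ^ c by ring]
  rw [abs_mul]
  have habs1 : |Cst * γ * ((-(1:ℝ)/2) ^ k * (-1) ^ k)| = Cst * γ * (1/2) ^ k := by
    rw [abs_mul, abs_mul, abs_mul, abs_pow, abs_pow, abs_of_pos hCpos, abs_of_pos hγpos,
      show |(-1:ℝ)/2| = 1/2 by rw [abs_div]; norm_num, show |(-1:ℝ)| = 1 by norm_num]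
    ring
  rw [habs1]
  have harg1 : ((d:ℝ) - 3)/2 + 1 = ((d:ℝ) - 1)/2 := by ring
  have harg2 : ((d:ℝ) - 3)/2 + 3/2 = (d:ℝ)/2 := by ring
  rw [harg1, harg2] at hstep3
  calc Cst * γ * (1/2) ^ k * |∫ t in (-1:ℝ)..1, fcos β k t * (1 - t ^ 2) ^ c|
      ≤ Cst * γ * (1/2) ^ k *
        (β ^ k * (Real.sqrt π * Real.Gamma (((d:ℝ) - 1)/2) / Real.Gamma ((d:ℝ)/2))) := by
        apply mul_le_mul_of_nonneg_left hstep3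
        positivity
    _ = (β / 2) ^ k * γ := by
        rw [hCst, div_pow β 2]
        have hsπ : (0:ℝ) < Real.sqrt π := Real.sqrt_pos.mpr Real.pi_pos
        field_simp
        ring
        rw [mul_assoc, ← mul_pow]; norm_num
    _ = (β / 2) ^ k * γ := rfl
end
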